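/- arXiv:2505.10606 — 3 statements merged into one kernel-verified Lean document; each statement's English description precedes it below -/
import Mathlib

section
/- Let Σ be a finite alphabet, let T be a compact decoder-only Transformer over Σ, and let α ∈ Σ^ω be an infinite sequence eventually learned by T. Then there exists δ > 0 such that no infinite sequence β ∈ Σ^ω that differs from α in infinitely many positions and satisfies d_H(α, β) ≤ δ is eventually learned by T. -/
open Finset Filter

open Classical in
/-- Relative Hamming distance between two finite sequences. -/
noncomputable def relHamming {A : Type*} {n : ℕ} (α β : Fin n → A) : ℝ :=
  ((Finset.univ.filter (fun i => α i ≠ β i)).card : ℝ) / n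

/-- Relative Hamming distance between two infinite sequences (1-indexed:
position `n ≥ 1` of the sequence `α : ℕ → A` is `α n`). -/
noncomputable def relHammingInf {A : Type*} (α β : ℕ → A) : ℝ :=
  Filter.liminf
    (fun n : ℕ => relHamming (fun i : Fin n => α (i.val + 1)) (fun i : Fin n => β (i.val + 1)))
    Filter.atTop

/-- A `d`-dimensional decoder-only attention layer. -/
structure AttentionLayer (d : ℕ) where
  p : ℕ → ℕ → (Fin d → ℝ)
  val : (Fin d → ℝ) → (Fin d → ℝ)
  w : (Fin d → ℝ) → (Fin d → ℝ) → (Fin d → ℝ) → ℝ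
  F : (Fin d → ℝ) → (Fin d → ℝ) → (Fin d → ℝ)
  w_pos : ∀ x y z, 0 < w x y z
  val_cont : Continuous val
  w_cont : Continuous fun t : (Fin d → ℝ) × (Fin d → ℝ) × (Fin d → ℝ) => w t.1 t.2.1 t.2.2
  F_cont : Continuous fun t : (Fin d → ℝ) × (Fin d → ℝ) => F t.1 t.2

/-- A positional encoding is compact if its range is contained in a compact set. -/
def AttentionLayer.CompactPE {d : ℕ} (L : AttentionLayer d) : Prop :=
  ∃ K : Set (Fin d → ℝ), IsCompact K ∧ ∀ i j : ℕ, L.p i j ∈ K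

/-- The `j`-th attention vector computed by the layer on input `x`. -/
noncomputable def AttentionLayer.attn {d : ℕ} (L : AttentionLayer d) {n : ℕ}
    (x : Fin n → (Fin d → ℝ)) (j : Fin n) : Fin d → ℝ :=
  (∑ i ∈ Finset.Iic j, L.w (x i) (x j) (L.p i.val j.val))⁻¹ •
    ∑ i ∈ Finset.Iic j, L.w (x i) (x j) (L.p i.val j.val) • L.val (x i)

/-- The output sequence of the layer on input `x`. -/
noncomputable def AttentionLayer.apply {d : ℕ} (L : AttentionLayer d) {n : ℕ}
    (x : Fin n → (Fin d → ℝ)) : Fin n → (Fin d → ℝ) :=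
  fun j => L.F (L.attn x j) (x j)

/-- `sim(x, x̂)`: the minimal `δ ≥ 0` such that `‖x_i − x̂_i‖ ≤ δ` for at least `(1−δ)n`
indices `i`. -/
noncomputable def simDist {d n : ℕ} (x y : Fin n → (Fin d → ℝ)) : ℝ :=
  sInf {δ : ℝ | 0 ≤ δ ∧
    (1 - δ) * n ≤ ((Finset.univ.filter (fun i => ‖x i - y i‖ ≤ δ)).card : ℝ)}

/-- Sequential application of a list of attention layers. -/
noncomputable def applyLayers {d : ℕ} (Ls : List (AttentionLayer d)) {n : ℕ}
    (x : Fin n → (Fin d → ℝ)) : Fin n → (Fin d → ℝ) :=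
  Ls.foldl (fun v L => L.apply v) x

/-- A decoder-only Transformer over a finite alphabet `A`. -/
structure Transformer (A : Type*) [Fintype A] (d : ℕ) where
  embed : A → ℕ → (Fin d → ℝ)
  layers : List (AttentionLayer d)
  proj : (Fin d → ℝ) → (A → ℝ)
  proj_cont : Continuous proj
  proj_nonneg : ∀ y a, 0 ≤ proj y a
  proj_sum : ∀ y, ∑ a, proj y a = 1

/-- The output probability distribution (as a vector in `ℝ^A`) of the Transformer on a
nonempty input sequence. -/
noncomputable def Transformer.eval {A : Type*} [Fintype A] {d : ℕ} (T : Transformer A d)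
    {n : ℕ} (α : Fin (n + 1) → A) : A → ℝ :=
  T.proj (applyLayers T.layers (fun j => T.embed (α j) j.val) (Fin.last n))

/-- A Transformer is compact if its input embedding has range in a compact set and all of
its layers have compact positional encoding. -/
def Transformer.IsCompactT {A : Type*} [Fintype A] {d : ℕ} (T : Transformer A d) : Prop :=
  (∃ K : Set (Fin d → ℝ), IsCompact K ∧ ∀ (a : A) (i : ℕ), T.embed a i ∈ K) ∧
  ∀ L ∈ T.layers, L.CompactPE

/-- `T` eventually learns the infinite sequence `α` (1-indexed: position `n ≥ 1` is `α n`). -/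
def EventuallyLearns {A : Type*} [Fintype A] {d : ℕ} (T : Transformer A d) (α : ℕ → A) :
    Prop :=
  ∃ ε : ℝ, 0 < ε ∧ ∃ n₀ : ℕ, ∀ n ≥ n₀, ∀ σ : A, σ ≠ α (n + 2) →
    T.eval (fun i : Fin (n + 1) => α (i.val + 1)) σ + ε ≤
      T.eval (fun i : Fin (n + 1) => α (i.val + 1)) (α (n + 2))


lemma card_small_indices (n : ℕ) (c : ℝ) (hc : 0 ≤ c) :
    ((Finset.univ.filter (fun j : Fin n => ((j : ℕ) : ℝ) + 1 < c)).card : ℝ) ≤ c := by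
  have h1 : (Finset.univ.filter (fun j : Fin n => ((j : ℕ) : ℝ) + 1 < c)).card ≤ ⌊c⌋₊ := by
    have h2 := Finset.card_le_card_of_injOn (fun j : Fin n => (j : ℕ))
      (t := Finset.range ⌊c⌋₊) (s := Finset.univ.filter (fun j : Fin n => ((j : ℕ) : ℝ) + 1 < c))
      (by
        intro j hj
        simp only [Finset.mem_coe, Finset.mem_filter] at hj
        have h3 : ((j : ℕ) + 1 : ℝ) ≤ c := by push_cast; linarith [hj.2]
        have h4 : (j : ℕ) + 1 ≤ ⌊c⌋₊ := Nat.le_floor (by exact_mod_cast h3)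
        simp only [Finset.mem_coe, Finset.mem_range]; omega)
      (by intro a _ b _ h; exact Fin.ext h)
    simpa using h2
  calc ((Finset.univ.filter (fun j : Fin n => ((j : ℕ) : ℝ) + 1 < c)).card : ℝ)
      ≤ (⌊c⌋₊ : ℝ) := by exact_mod_cast h1
    _ ≤ c := Nat.floor_le hc

lemma avg_diff {d : ℕ} {ι : Type*} (t : Finset ι) (ht : t.Nonempty)
    (w w' : ι → ℝ) (v v' : ι → (Fin d → ℝ)) {c Cw M : ℝ} (hc : 0 < c) (hM : 0 ≤ M)
    (hw : ∀ i ∈ t, w i ∈ Set.Icc c Cw) (hw' : ∀ i ∈ t, w' i ∈ Set.Icc c Cw)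
    (hv : ∀ i ∈ t, ‖v i‖ ≤ M) (hv' : ∀ i ∈ t, ‖v' i‖ ≤ M) :
    ‖(∑ i ∈ t, w i)⁻¹ • ∑ i ∈ t, w i • v i - (∑ i ∈ t, w' i)⁻¹ • ∑ i ∈ t, w' i • v' i‖
      ≤ (2*M*(∑ i ∈ t, |w i - w' i|) + Cw*(∑ i ∈ t, ‖v i - v' i‖)) / (c * t.card) := by
  set W := ∑ i ∈ t, w i with hWdef
  set W' := ∑ i ∈ t, w' i with hW'def
  set S := ∑ i ∈ t, w i • v i with hSdef
  set S' := ∑ i ∈ t, w' i • v' i with hS'def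
  set Dw := ∑ i ∈ t, |w i - w' i| with hDwdef
  set Dv := ∑ i ∈ t, ‖v i - v' i‖ with hDvdef
  have hN : (1 : ℝ) ≤ t.card := by exact_mod_cast Finset.card_pos.2 ht
  have hWc : c * t.card ≤ W := by
    have := Finset.card_nsmul_le_sum t w c (fun i hi => (hw i hi).1)
    rw [nsmul_eq_mul] at this; linarith
  have hW'c : c * t.card ≤ W' := by
    have := Finset.card_nsmul_le_sum t w' c (fun i hi => (hw' i hi).1)
    rw [nsmul_eq_mul] at this; linarith
  have hcN : 0 < c * t.card := by positivity
  have hW0 : 0 < W := lt_of_lt_of_le hcN hWc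
  have hW'0 : 0 < W' := lt_of_lt_of_le hcN hW'c
  have hDw0 : 0 ≤ Dw := Finset.sum_nonneg fun i _ => abs_nonneg _
  have hDv0 : 0 ≤ Dv := Finset.sum_nonneg fun i _ => norm_nonneg _
  have key : W⁻¹ • S - W'⁻¹ • S' = W⁻¹ • (S - S') + (W⁻¹ - W'⁻¹) • S' := by
    rw [smul_sub, sub_smul]; abel
  have hSS' : ‖S - S'‖ ≤ M * Dw + Cw * Dv := by
    have h1 : S - S' = ∑ i ∈ t, (w i • v i - w' i • v' i) := by
      rw [Finset.sum_sub_distrib]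
    rw [h1]
    calc ‖∑ i ∈ t, (w i • v i - w' i • v' i)‖
        ≤ ∑ i ∈ t, ‖w i • v i - w' i • v' i‖ := norm_sum_le _ _
      _ ≤ ∑ i ∈ t, (|w i - w' i| * M + Cw * ‖v i - v' i‖) := by
          apply Finset.sum_le_sum
          intro i hi
          have h2 : w i • v i - w' i • v' i = (w i - w' i) • v i + w' i • (v i - v' i) := by
            rw [sub_smul, smul_sub]; abel
          rw [h2]
          calc ‖(w i - w' i) • v i + w' i • (v i - v' i)‖
              ≤ ‖(w i - w' i) • v i‖ + ‖w' i • (v i - v' i)‖ := norm_add_le _ _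
            _ = |w i - w' i| * ‖v i‖ + |w' i| * ‖v i - v' i‖ := by
                rw [norm_smul, norm_smul, Real.norm_eq_abs, Real.norm_eq_abs]
            _ ≤ |w i - w' i| * M + Cw * ‖v i - v' i‖ := by
                have h5 := hv i hi
                have h3 := hw' i hi
                have h4 : |w' i| ≤ Cw := by
                  rw [abs_of_pos (lt_of_lt_of_le hc h3.1)]; exact h3.2
                gcongr
      _ = M * Dw + Cw * Dv := by
          rw [Finset.sum_add_distrib, ← Finset.sum_mul, ← Finset.mul_sum]
          ring
  have hS'n : ‖S'‖ ≤ W' * M := by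
    calc ‖S'‖ ≤ ∑ i ∈ t, ‖w' i • v' i‖ := norm_sum_le _ _
      _ ≤ ∑ i ∈ t, w' i * M := by
          apply Finset.sum_le_sum
          intro i hi
          have hpos := lt_of_lt_of_le hc (hw' i hi).1
          rw [norm_smul, Real.norm_eq_abs, abs_of_pos hpos]
          exact mul_le_mul_of_nonneg_left (hv' i hi) hpos.le
      _ = W' * M := by rw [← Finset.sum_mul]
  have hWW' : |W - W'| ≤ Dw := by
    rw [hWdef, hW'def, ← Finset.sum_sub_distrib]
    exact Finset.abs_sum_le_sum_abs _ _
  have hinv : |W⁻¹ - W'⁻¹| ≤ Dw / (W * W') := by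
    have h5 : W⁻¹ - W'⁻¹ = (W' - W) / (W * W') := by field_simp
    rw [h5, abs_div, abs_of_pos (by positivity : (0:ℝ) < W * W'), abs_sub_comm]
    gcongr
  calc ‖W⁻¹ • S - W'⁻¹ • S'‖
      ≤ ‖W⁻¹ • (S - S')‖ + ‖(W⁻¹ - W'⁻¹) • S'‖ := by rw [key]; exact norm_add_le _ _
    _ = W⁻¹ * ‖S - S'‖ + |W⁻¹ - W'⁻¹| * ‖S'‖ := by
        rw [norm_smul, norm_smul, Real.norm_eq_abs, Real.norm_eq_abs,
          abs_of_pos (by positivity : (0:ℝ) < W⁻¹)]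
    _ ≤ W⁻¹ * (M * Dw + Cw * Dv) + (Dw / (W * W')) * (W' * M) := by
        have g1 : W⁻¹ * ‖S - S'‖ ≤ W⁻¹ * (M * Dw + Cw * Dv) :=
          mul_le_mul_of_nonneg_left hSS' (by positivity)
        have g2 : |W⁻¹ - W'⁻¹| * ‖S'‖ ≤ (Dw / (W * W')) * (W' * M) :=
          mul_le_mul hinv hS'n (norm_nonneg _) (by positivity)
        linarith
    _ = (M * Dw + Cw * Dv) / W + M * Dw / W := by field_simp
    _ = (2*M*Dw + Cw*Dv) / W := by ring
    _ ≤ (2*M*Dw + Cw*Dv) / (c * t.card) := by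
        have hCw : 0 ≤ Cw := by
          obtain ⟨i, hi⟩ := ht
          exact le_trans hc.le (le_trans (hw i hi).1 (hw i hi).2)
        exact div_le_div_of_nonneg_left
          (by nlinarith [mul_nonneg hM hDw0, mul_nonneg hCw hDv0]) hcN hWc
lemma layer_range {d : ℕ} (L : AttentionLayer d) (K : Set (Fin d → ℝ)) (hK : IsCompact K) :
    ∃ K' : Set (Fin d → ℝ), IsCompact K' ∧ K'.Nonempty ∧
      ∀ (n : ℕ) (x : Fin n → (Fin d → ℝ)), (∀ i, x i ∈ K) → ∀ j, L.apply x j ∈ K' := by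
  obtain ⟨M₀, hM₀⟩ := hK.exists_bound_of_continuousOn L.val_cont.continuousOn
  set M := max M₀ 0 with hMdef
  have hM : ∀ y ∈ K, ‖L.val y‖ ≤ M := fun y hy => (hM₀ y hy).trans (le_max_left _ _)
  set H := Metric.closedBall (0 : Fin d → ℝ) M with hHdef
  refine ⟨insert 0 ((fun t : (Fin d → ℝ) × (Fin d → ℝ) => L.F t.1 t.2) '' (H ×ˢ K)), ?_,
    ⟨0, Set.mem_insert _ _⟩, ?_⟩
  · exact (((isCompact_closedBall _ _).prod hK).image L.F_cont).insert 0
  · intro n x hx j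
    refine Set.mem_insert_iff.2 (Or.inr ⟨(L.attn x j, x j), ⟨?_, hx j⟩, rfl⟩)
    have hmem : L.attn x j ∈ H := by
      have heq : L.attn x j = Finset.centerMass (Finset.Iic j)
          (fun i => L.w (x i) (x j) (L.p i.val j.val)) (fun i => L.val (x i)) := rfl
      rw [heq]
      apply Convex.centerMass_mem (convex_closedBall _ _)
      · exact fun i _ => (L.w_pos _ _ _).le
      · exact Finset.sum_pos (fun i _ => L.w_pos _ _ _) ⟨j, Finset.mem_Iic.2 le_rfl⟩
      · intro i _
        rw [Metric.mem_closedBall, dist_zero_right]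
        exact hM _ (hx i)
    exact hmem

set_option maxHeartbeats 1000000 in
lemma layer_perturb {d : ℕ} (L : AttentionLayer d) (Kp : Set (Fin d → ℝ)) (hKp : IsCompact Kp)
    (hp : ∀ i j : ℕ, L.p i j ∈ Kp) (K : Set (Fin d → ℝ)) (hK : IsCompact K) (hKne : K.Nonempty)
    (ε : ℝ) (hε : 0 < ε) :
    ∃ θ > 0, ∃ η > 0, ∀ (n : ℕ) (x x' : Fin n → (Fin d → ℝ)) (B : Finset (Fin n)),
      (∀ i, x i ∈ K) → (∀ i, x' i ∈ K) → ((B.card : ℝ) ≤ θ * n) →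
      (∀ i, i ∉ B → dist (x i) (x' i) ≤ η) →
      ∀ j, j ∉ B → ε * n ≤ (j : ℕ) + 1 → dist (L.apply x j) (L.apply x' j) ≤ ε := by
  classical
  -- bounds on w over K × K × Kp
  set K3 := K ×ˢ (K ×ˢ Kp) with hK3def
  have hK3 : IsCompact K3 := hK.prod (hK.prod hKp)
  have hK3ne : K3.Nonempty := hKne.prod (hKne.prod ⟨L.p 0 0, hp 0 0⟩)
  set g := fun t : (Fin d → ℝ) × (Fin d → ℝ) × (Fin d → ℝ) => L.w t.1 t.2.1 t.2.2 with hgdef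
  obtain ⟨z₀, hz₀, hmin⟩ := hK3.exists_isMinOn hK3ne L.w_cont.continuousOn
  obtain ⟨z₁, hz₁, hmax⟩ := hK3.exists_isMaxOn hK3ne L.w_cont.continuousOn
  set c := g z₀ with hcdef
  set Cw := g z₁ with hCwdef
  have hc : 0 < c := L.w_pos _ _ _
  have hCw : 0 < Cw := L.w_pos _ _ _
  have hgIcc : ∀ z ∈ K3, g z ∈ Set.Icc c Cw := fun z hz => ⟨hmin hz, hmax hz⟩
  -- bound on val
  obtain ⟨M₀, hM₀⟩ := hK.exists_bound_of_continuousOn L.val_cont.continuousOn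
  set M := max M₀ 0 with hMdef
  have hM : ∀ y ∈ K, ‖L.val y‖ ≤ M := fun y hy => (hM₀ y hy).trans (le_max_left _ _)
  have hM0 : 0 ≤ M := le_max_right _ _
  -- uniform continuity of F on H ×ˢ K
  set H := Metric.closedBall (0 : Fin d → ℝ) M with hHdef
  have hHK : IsCompact (H ×ˢ K) := (isCompact_closedBall _ _).prod hK
  obtain ⟨δF, hδF, hF⟩ := Metric.uniformContinuousOn_iff.1
    (hHK.uniformContinuousOn_of_continuous L.F_cont.continuousOn) ε hε
  -- the common small constant
  set X := 2*M + Cw + 4*M*Cw with hXdef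
  have hX : 0 ≤ X := by nlinarith
  set s := c * δF / (2 * (X + 1)) with hsdef
  have hs : 0 < s := by positivity
  -- uniform continuity of w and val
  obtain ⟨ηw, hηw, hwun⟩ := Metric.uniformContinuousOn_iff.1
    (hK3.uniformContinuousOn_of_continuous L.w_cont.continuousOn) s hs
  obtain ⟨ηv, hηv, hvun⟩ := Metric.uniformContinuousOn_iff.1
    (hK.uniformContinuousOn_of_continuous L.val_cont.continuousOn) s hs
  refine ⟨ε * s, by positivity, min (min (ηw/2) (ηv/2)) (δF/2), by positivity, ?_⟩
  intro n x x' B hx hx' hB hcl j hjB hjn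
  set η := min (min (ηw/2) (ηv/2)) (δF/2) with hηdef
  have hηw' : η < ηw := lt_of_le_of_lt (le_trans (min_le_left _ _) (min_le_left _ _)) (by linarith)
  have hηv' : η < ηv := lt_of_le_of_lt (le_trans (min_le_left _ _) (min_le_right _ _)) (by linarith)
  have hηF : η ≤ δF/2 := min_le_right _ _
  set t := Finset.Iic j with htdef
  have htne : t.Nonempty := ⟨j, Finset.mem_Iic.2 le_rfl⟩
  have hNcard : (t.card : ℝ) = (j : ℕ) + 1 := by
    rw [htdef, Fin.card_Iic]; push_cast; ring
  set N := (t.card : ℝ) with hNdef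
  have hN1 : (1:ℝ) ≤ N := by
    rw [hNdef]; exact_mod_cast Finset.card_pos.2 htne
  have hN0 : (0:ℝ) < N := by linarith
  set wi := fun i : Fin n => L.w (x i) (x j) (L.p i.val j.val) with hwidef
  set wi' := fun i : Fin n => L.w (x' i) (x' j) (L.p i.val j.val) with hwi'def
  set vi := fun i : Fin n => L.val (x i) with hvidef
  set vi' := fun i : Fin n => L.val (x' i) with hvi'def
  have hmemK3 : ∀ i : Fin n, (x i, x j, L.p i.val j.val) ∈ K3 :=
    fun i => ⟨hx i, hx j, hp _ _⟩
  have hmemK3' : ∀ i : Fin n, (x' i, x' j, L.p i.val j.val) ∈ K3 :=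
    fun i => ⟨hx' i, hx' j, hp _ _⟩
  have hwIcc : ∀ i ∈ t, wi i ∈ Set.Icc c Cw := fun i _ => hgIcc _ (hmemK3 i)
  have hwIcc' : ∀ i ∈ t, wi' i ∈ Set.Icc c Cw := fun i _ => hgIcc _ (hmemK3' i)
  have hvM : ∀ i ∈ t, ‖vi i‖ ≤ M := fun i _ => hM _ (hx i)
  have hvM' : ∀ i ∈ t, ‖vi' i‖ ≤ M := fun i _ => hM _ (hx' i)
  -- good indices: w close
  have hgoodw : ∀ i ∈ t.filter (fun i => i ∉ B), |wi i - wi' i| ≤ s := by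
    intro i hi
    rw [Finset.mem_filter] at hi
    have hdi : dist (x i) (x' i) ≤ η := hcl i hi.2
    have hdj : dist (x j) (x' j) ≤ η := hcl j hjB
    have hdist : dist ((x i, x j, L.p i.val j.val) : (Fin d → ℝ) × (Fin d → ℝ) × (Fin d → ℝ))
        (x' i, x' j, L.p i.val j.val) < ηw := by
      rw [Prod.dist_eq, Prod.dist_eq, dist_self]
      apply max_lt (lt_of_le_of_lt hdi hηw')
      exact max_lt (lt_of_le_of_lt hdj hηw') (by linarith)
    have := hwun _ (hmemK3 i) _ (hmemK3' i) hdist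
    rw [Real.dist_eq] at this
    exact this.le
  have hgoodv : ∀ i ∈ t.filter (fun i => i ∉ B), ‖vi i - vi' i‖ ≤ s := by
    intro i hi
    rw [Finset.mem_filter] at hi
    have hdi : dist (x i) (x' i) < ηv := lt_of_le_of_lt (hcl i hi.2) hηv'
    have := hvun _ (hx i) _ (hx' i) hdi
    rw [dist_eq_norm] at this
    exact this.le
  -- bad indices
  have hbadw : ∀ i ∈ t, |wi i - wi' i| ≤ Cw := by
    intro i hi
    have h1 := hwIcc i hi
    have h2 := hwIcc' i hi
    rw [abs_sub_le_iff]
    constructor <;> [linarith [h1.2, h2.1]; linarith [h2.2, h1.1]]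
  have hbadv : ∀ i ∈ t, ‖vi i - vi' i‖ ≤ 2*M := by
    intro i hi
    calc ‖vi i - vi' i‖ ≤ ‖vi i‖ + ‖vi' i‖ := norm_sub_le _ _
      _ ≤ 2*M := by linarith [hvM i hi, hvM' i hi]
  -- sums
  have hsplit : ∀ (f : Fin n → ℝ), (∀ i ∈ t, 0 ≤ f i) → (∀ i ∈ t, f i ≤ Cw + 2*M) →
      True := fun _ _ _ => trivial
  have hθn : (B.card : ℝ) ≤ (ε*s) * n := hB
  have hBN : (B.card : ℝ) ≤ s * N := by
    have : ε * (n:ℝ) ≤ N := by rw [hNcard]; exact hjn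
    calc (B.card : ℝ) ≤ (ε*s) * n := hθn
      _ = s * (ε * n) := by ring
      _ ≤ s * N := by nlinarith
  have hDw : (∑ i ∈ t, |wi i - wi' i|) ≤ N * s + (s * N) * Cw := by
    rw [← Finset.sum_filter_add_sum_filter_not t (fun i => i ∈ B)]
    have h1 : (∑ i ∈ t.filter (fun i => i ∈ B), |wi i - wi' i|)
        ≤ (t.filter (fun i => i ∈ B)).card * Cw := by
      have := Finset.sum_le_card_nsmul (t.filter (fun i => i ∈ B)) (fun i => |wi i - wi' i|) Cw
        (fun i hi => hbadw i (Finset.mem_filter.1 hi).1)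
      rwa [nsmul_eq_mul] at this
    have h1' : ((t.filter (fun i => i ∈ B)).card : ℝ) ≤ (B.card : ℝ) := by
      exact_mod_cast Finset.card_le_card (fun i hi => (Finset.mem_filter.1 hi).2)
    have h2 : (∑ i ∈ t.filter (fun i => ¬ i ∈ B), |wi i - wi' i|)
        ≤ (t.filter (fun i => ¬ i ∈ B)).card * s := by
      have := Finset.sum_le_card_nsmul (t.filter (fun i => ¬ i ∈ B)) (fun i => |wi i - wi' i|) s
        (fun i hi => hgoodw i hi)
      rwa [nsmul_eq_mul] at this
    have h2' : ((t.filter (fun i => ¬ i ∈ B)).card : ℝ) ≤ N := by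
      rw [hNdef]
      exact_mod_cast Finset.card_le_card (Finset.filter_subset _ _)
    have hc1 : ((t.filter (fun i => i ∈ B)).card : ℝ) * Cw ≤ (s*N) * Cw := by
      apply mul_le_mul_of_nonneg_right _ hCw.le
      exact h1'.trans hBN
    have hc2 : ((t.filter (fun i => ¬ i ∈ B)).card : ℝ) * s ≤ N * s :=
      mul_le_mul_of_nonneg_right h2' hs.le
    linarith
  have hDv : (∑ i ∈ t, ‖vi i - vi' i‖) ≤ N * s + (s * N) * (2*M) := by
    rw [← Finset.sum_filter_add_sum_filter_not t (fun i => i ∈ B)]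
    have h1 : (∑ i ∈ t.filter (fun i => i ∈ B), ‖vi i - vi' i‖)
        ≤ (t.filter (fun i => i ∈ B)).card * (2*M) := by
      have := Finset.sum_le_card_nsmul (t.filter (fun i => i ∈ B)) (fun i => ‖vi i - vi' i‖) (2*M)
        (fun i hi => hbadv i (Finset.mem_filter.1 hi).1)
      rwa [nsmul_eq_mul] at this
    have h1' : ((t.filter (fun i => i ∈ B)).card : ℝ) ≤ (B.card : ℝ) := by
      exact_mod_cast Finset.card_le_card (fun i hi => (Finset.mem_filter.1 hi).2)
    have h2 : (∑ i ∈ t.filter (fun i => ¬ i ∈ B), ‖vi i - vi' i‖)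
        ≤ (t.filter (fun i => ¬ i ∈ B)).card * s := by
      have := Finset.sum_le_card_nsmul (t.filter (fun i => ¬ i ∈ B)) (fun i => ‖vi i - vi' i‖) s
        (fun i hi => hgoodv i hi)
      rwa [nsmul_eq_mul] at this
    have h2' : ((t.filter (fun i => ¬ i ∈ B)).card : ℝ) ≤ N := by
      rw [hNdef]
      exact_mod_cast Finset.card_le_card (Finset.filter_subset _ _)
    have hc1 : ((t.filter (fun i => i ∈ B)).card : ℝ) * (2*M) ≤ (s*N) * (2*M) := by
      apply mul_le_mul_of_nonneg_right _ (by linarith)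
      exact h1'.trans hBN
    have hc2 : ((t.filter (fun i => ¬ i ∈ B)).card : ℝ) * s ≤ N * s :=
      mul_le_mul_of_nonneg_right h2' hs.le
    linarith
  -- the attention difference
  have hattn : ‖L.attn x j - L.attn x' j‖ ≤ δF/2 := by
    have hmain := avg_diff t htne wi wi' vi vi' hc hM0 hwIcc hwIcc' hvM hvM'
    rw [← hNdef] at hmain
    have heq : L.attn x j = (∑ i ∈ t, wi i)⁻¹ • ∑ i ∈ t, wi i • vi i := rfl
    have heq' : L.attn x' j = (∑ i ∈ t, wi' i)⁻¹ • ∑ i ∈ t, wi' i • vi' i := rfl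
    rw [heq, heq']
    refine hmain.trans ?_
    have hnum : 2*M*(∑ i ∈ t, |wi i - wi' i|) + Cw*(∑ i ∈ t, ‖vi i - vi' i‖)
        ≤ s * N * X := by
      have e1 : 2*M*(∑ i ∈ t, |wi i - wi' i|) ≤ 2*M*(N * s + (s * N) * Cw) :=
        mul_le_mul_of_nonneg_left hDw (by linarith)
      have e2 : Cw*(∑ i ∈ t, ‖vi i - vi' i‖) ≤ Cw*(N * s + (s * N) * (2*M)) :=
        mul_le_mul_of_nonneg_left hDv hCw.le
      have e3 : 2*M*(N * s + (s * N) * Cw) + Cw*(N * s + (s * N) * (2*M)) = s * N * X := by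
        rw [hXdef]; ring
      linarith
    have hdenom : (0:ℝ) < c * N := by positivity
    have hX1 : (X + 1 : ℝ) ≠ 0 := by positivity
    have hs1 : s * (X + 1) = c * δF / 2 := by rw [hsdef]; field_simp
    calc (2*M*(∑ i ∈ t, |wi i - wi' i|) + Cw*(∑ i ∈ t, ‖vi i - vi' i‖)) / (c * N)
        ≤ (s * N * X) / (c * N) := div_le_div_of_nonneg_right hnum hdenom.le
      _ ≤ (s * N * (X+1)) / (c * N) := by
          apply div_le_div_of_nonneg_right ?_ hdenom.le
          nlinarith [mul_nonneg hs.le hN0.le]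
      _ = (N * (s * (X + 1))) / (c * N) := by ring_nf
      _ = (N * (c * δF / 2)) / (c * N) := by rw [hs1]
      _ = δF/2 := by field_simp
  -- membership of attention vectors in H
  have hattnH : ∀ (y : Fin n → (Fin d → ℝ)), (∀ i, y i ∈ K) → L.attn y j ∈ H := by
    intro y hy
    have heq : L.attn y j = Finset.centerMass (Finset.Iic j)
        (fun i => L.w (y i) (y j) (L.p i.val j.val)) (fun i => L.val (y i)) := rfl
    rw [heq]
    apply Convex.centerMass_mem (convex_closedBall _ _)
    · exact fun i _ => (L.w_pos _ _ _).le
    · exact Finset.sum_pos (fun i _ => L.w_pos _ _ _) ⟨j, Finset.mem_Iic.2 le_rfl⟩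
    · intro i _
      rw [Metric.mem_closedBall, dist_zero_right]
      exact hM _ (hy i)
  have hdpair : dist ((L.attn x j, x j) : (Fin d → ℝ) × (Fin d → ℝ)) (L.attn x' j, x' j) < δF := by
    rw [Prod.dist_eq]
    apply max_lt
    · rw [dist_eq_norm]; linarith
    · linarith [hcl j hjB, hηF]
  have hres := hF _ (Set.mk_mem_prod (hattnH x hx) (hx j))
    _ (Set.mk_mem_prod (hattnH x' hx') (hx' j)) hdpair
  exact hres.le
set_option maxHeartbeats 1000000 in
lemma stack_perturb {d : ℕ} (Ls : List (AttentionLayer d)) (hLs : ∀ L ∈ Ls, L.CompactPE)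
    (K : Set (Fin d → ℝ)) (hK : IsCompact K) (hKne : K.Nonempty) :
    ∃ K' : Set (Fin d → ℝ), IsCompact K' ∧ K'.Nonempty ∧
      (∀ (n : ℕ) (x : Fin n → (Fin d → ℝ)), (∀ i, x i ∈ K) → ∀ j, applyLayers Ls x j ∈ K') ∧
      ∀ ε : ℝ, 0 < ε → ∃ θ > 0, ∃ η > 0,
        ∀ (n : ℕ) (x x' : Fin n → (Fin d → ℝ)) (B : Finset (Fin n)),
        (∀ i, x i ∈ K) → (∀ i, x' i ∈ K) → ((B.card : ℝ) ≤ θ * n) →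
        (∀ i, i ∉ B → dist (x i) (x' i) ≤ η) →
        ∃ B' : Finset (Fin n), ((B'.card : ℝ) ≤ ε * n) ∧
          (∀ i, i ∉ B → ε * n ≤ ((i : ℕ) : ℝ) + 1 → i ∉ B') ∧
          ∀ j, j ∉ B' → dist (applyLayers Ls x j) (applyLayers Ls x' j) ≤ ε := by
  classical
  induction Ls generalizing K with
  | nil =>
    refine ⟨K, hK, hKne, ?_, ?_⟩
    · intro n x hx j
      simpa only [applyLayers, List.foldl_nil] using hx j
    · intro ε hε
      refine ⟨ε, hε, ε, hε, ?_⟩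
      intro n x x' B hx hx' hB hcl
      exact ⟨B, hB, fun i hi _ => hi, fun j hj => by
        simpa only [applyLayers, List.foldl_nil] using hcl j hj⟩
  | cons L rest ih =>
    have hL : L.CompactPE := hLs L List.mem_cons_self
    obtain ⟨Kp, hKp, hp⟩ := hL
    obtain ⟨K₁, hK₁, hK₁ne, hK₁mem⟩ := layer_range L K hK
    obtain ⟨K', hK', hK'ne, hK'mem, hpert⟩ :=
      ih (fun L' hL' => hLs L' (List.mem_cons_of_mem _ hL')) K₁ hK₁ hK₁ne
    have happ : ∀ (n : ℕ) (x : Fin n → (Fin d → ℝ)),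
        applyLayers (L :: rest) x = applyLayers rest (L.apply x) := by
      intro n x
      simp only [applyLayers, List.foldl_cons]
    refine ⟨K', hK', hK'ne, ?_, ?_⟩
    · intro n x hx j
      rw [happ]
      exact hK'mem n _ (fun i => hK₁mem n x hx i) j
    · intro ε hε
      obtain ⟨θ₂, hθ₂, η₂, hη₂, h₂⟩ := hpert ε hε
      set ε₁ := min (min (θ₂/2) η₂) ε with hε₁def
      have hε₁ : 0 < ε₁ := lt_min (lt_min (by linarith) hη₂) hε
      obtain ⟨θ₁, hθ₁, η₁, hη₁, h₁⟩ := layer_perturb L Kp hKp hp K hK hKne ε₁ hε₁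
      refine ⟨min θ₁ (θ₂/2), lt_min hθ₁ (by linarith), η₁, hη₁, ?_⟩
      intro n x x' B hx hx' hB hcl
      set Bmid := B ∪ Finset.univ.filter (fun j : Fin n => ((j : ℕ) : ℝ) + 1 < ε₁ * n)
        with hBmiddef
      have hBmidcard : (Bmid.card : ℝ) ≤ θ₂ * n := by
        have h4 : (Bmid.card : ℝ) ≤ (B.card : ℝ) +
            ((Finset.univ.filter (fun j : Fin n => ((j : ℕ) : ℝ) + 1 < ε₁ * n)).card : ℝ) := by
          rw [hBmiddef]
          exact_mod_cast Finset.card_union_le _ _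
        have h5 := card_small_indices n (ε₁ * n) (by positivity)
        have h6 : (B.card : ℝ) ≤ (θ₂/2) * n := by
          refine hB.trans ?_
          exact mul_le_mul_of_nonneg_right (min_le_right _ _) (Nat.cast_nonneg n)
        have h7 : ε₁ * (n : ℝ) ≤ (θ₂/2) * n :=
          mul_le_mul_of_nonneg_right (le_trans (min_le_left _ _) (min_le_left _ _))
            (Nat.cast_nonneg n)
        linarith
      have hmidcl : ∀ i, i ∉ Bmid → dist (L.apply x i) (L.apply x' i) ≤ η₂ := by
        intro i hi
        have hiB : i ∉ B := fun h => hi (Finset.mem_union_left _ h)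
        have hin : ε₁ * n ≤ ((i : ℕ) : ℝ) + 1 := by
          by_contra hlt
          push_neg at hlt
          exact hi (Finset.mem_union_right _
            (Finset.mem_filter.2 ⟨Finset.mem_univ _, hlt⟩))
        have hBθ₁ : (B.card : ℝ) ≤ θ₁ * n :=
          hB.trans (mul_le_mul_of_nonneg_right (min_le_left _ _) (Nat.cast_nonneg n))
        have := h₁ n x x' B hx hx' hBθ₁ hcl i hiB hin
        exact this.trans (le_trans (min_le_left _ _) (min_le_right _ _))
      obtain ⟨B', hB'card, hB'keep, hB'dist⟩ := h₂ n (L.apply x) (L.apply x') Bmid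
        (fun i => hK₁mem n x hx i) (fun i => hK₁mem n x' hx' i) hBmidcard hmidcl
      refine ⟨B', hB'card, ?_, ?_⟩
      · intro i hiB hin
        refine hB'keep i ?_ hin
        intro hmem
        rcases Finset.mem_union.1 hmem with h | h
        · exact hiB h
        · have h8 := (Finset.mem_filter.1 h).2
          have h9 : ε₁ * (n : ℝ) ≤ ε * n :=
            mul_le_mul_of_nonneg_right (min_le_right _ _) (Nat.cast_nonneg n)
          linarith
      · intro j hj
        rw [happ, happ]
        exact hB'dist j hj
open Classical in
/-- Number of positions where two finite sequences differ. -/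
noncomputable def fdiff {A : Type*} {k : ℕ} (γ γ' : Fin k → A) : ℕ :=
  (Finset.univ.filter (fun i => γ i ≠ γ' i)).card

set_option maxHeartbeats 1000000 in
open Classical in
lemma eval_close {A : Type*} [Fintype A] {d : ℕ} (T : Transformer A d) (hT : T.IsCompactT)
    (a₀ : A) (ε : ℝ) (hε : 0 < ε) :
    ∃ θ > 0, ∀ (n : ℕ) (γ γ' : Fin (n+1) → A),
      γ (Fin.last n) = γ' (Fin.last n) →
      ((fdiff γ γ' : ℕ) : ℝ) ≤ θ * ((n : ℝ) + 1) →
      ∀ a, |T.eval γ a - T.eval γ' a| ≤ ε := by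
  obtain ⟨⟨K₀, hK₀, hemb⟩, hlayers⟩ := hT
  have hK₀ne : K₀.Nonempty := ⟨T.embed a₀ 0, hemb a₀ 0⟩
  obtain ⟨K', hK', hK'ne, hK'mem, hpert⟩ := stack_perturb T.layers hlayers K₀ hK₀ hK₀ne
  obtain ⟨δp, hδp, hproj⟩ := Metric.uniformContinuousOn_iff.1
    (hK'.uniformContinuousOn_of_continuous T.proj_cont.continuousOn) ε hε
  set εs := min 1 (δp/2) with hεsdef
  have hεs : 0 < εs := lt_min one_pos (by linarith)
  obtain ⟨θ, hθ, η, hη, hmain⟩ := hpert εs hεs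
  refine ⟨θ, hθ, ?_⟩
  intro n γ γ' hlast hcard a
  set x := fun j : Fin (n+1) => T.embed (γ j) j.val with hxdef
  set x' := fun j : Fin (n+1) => T.embed (γ' j) j.val with hx'def
  set B := Finset.univ.filter (fun i : Fin (n+1) => γ i ≠ γ' i) with hBdef
  have hBf : B.card = fdiff γ γ' := rfl
  have hBcard : (B.card : ℝ) ≤ θ * ((n+1 : ℕ) : ℝ) := by
    rw [hBf]; push_cast; push_cast at hcard; linarith
  have hcl : ∀ i, i ∉ B → dist (x i) (x' i) ≤ η := by
    intro i hi
    have hide : γ i = γ' i := by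
      by_contra h
      exact hi (Finset.mem_filter.2 ⟨Finset.mem_univ _, h⟩)
    rw [hxdef, hx'def]
    simp only [hide, dist_self]
    exact hη.le
  obtain ⟨B', hB'card, hB'keep, hB'dist⟩ := hmain (n+1) x x' B
    (fun i => hemb _ _) (fun i => hemb _ _) hBcard hcl
  have hlastout : Fin.last n ∉ B' := by
    refine hB'keep (Fin.last n) ?_ ?_
    · rw [hBdef]
      simp only [Finset.mem_filter, Finset.mem_univ, true_and, not_not]
      exact hlast
    · have h1 : εs ≤ 1 := min_le_left _ _
      have h2 : ((Fin.last n : ℕ) : ℝ) + 1 = ((n+1 : ℕ) : ℝ) := by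
        simp [Fin.val_last]
      rw [h2]
      nlinarith [Nat.cast_nonneg (α := ℝ) (n+1)]
  have hdist := hB'dist _ hlastout
  have houtmem : applyLayers T.layers x (Fin.last n) ∈ K' :=
    hK'mem _ x (fun i => hemb _ _) _
  have houtmem' : applyLayers T.layers x' (Fin.last n) ∈ K' :=
    hK'mem _ x' (fun i => hemb _ _) _
  have hdlt : dist (applyLayers T.layers x (Fin.last n))
      (applyLayers T.layers x' (Fin.last n)) < δp :=
    lt_of_le_of_lt (hdist.trans (min_le_right _ _)) (by linarith)
  have hp := hproj _ houtmem _ houtmem' hdlt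
  have hpi := dist_le_pi_dist (T.proj (applyLayers T.layers x (Fin.last n)))
    (T.proj (applyLayers T.layers x' (Fin.last n))) a
  have heval : T.eval γ a = T.proj (applyLayers T.layers x (Fin.last n)) a := rfl
  have heval' : T.eval γ' a = T.proj (applyLayers T.layers x' (Fin.last n)) a := rfl
  rw [heval, heval', ← Real.dist_eq]
  exact le_of_lt (lt_of_le_of_lt hpi hp)
open Classical in
noncomputable def cntS (S : Set ℕ) (n : ℕ) : ℕ := ((Finset.Icc 1 n).filter (· ∈ S)).card

lemma cntS_fin (S : Set ℕ) [DecidablePred (· ∈ S)] (n : ℕ) :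
    (Finset.univ.filter (fun i : Fin n => ((i : ℕ) + 1) ∈ S)).card = cntS S n := by
  apply Finset.card_bij (fun (i : Fin n) _ => (i : ℕ) + 1)
  · intro i hi
    simp only [Finset.mem_filter, Finset.mem_univ, true_and] at hi
    simp only [Finset.mem_filter, Finset.mem_Icc]
    exact ⟨⟨by omega, by omega⟩, hi⟩
  · intro a _ b _ h
    exact Fin.ext (by omega)
  · intro j hj
    simp only [Finset.mem_filter, Finset.mem_Icc] at hj
    refine ⟨⟨j - 1, by omega⟩, ?_, by simp; omega⟩
    simp only [Finset.mem_filter, Finset.mem_univ, true_and]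
    have : j - 1 + 1 = j := by omega
    rw [this]
    exact hj.2

open Classical in
lemma cntS_le (S : Set ℕ) (n : ℕ) : cntS S n ≤ n := by
  calc cntS S n ≤ (Finset.Icc 1 n).card := Finset.card_filter_le _ _
    _ = n := by rw [Nat.card_Icc]; omega

open Classical in
lemma cntS_mono (S : Set ℕ) {a b : ℕ} (h : a ≤ b) : cntS S a ≤ cntS S b := by
  apply Finset.card_le_card
  apply Finset.filter_subset_filter
  intro t ht
  simp only [Finset.mem_Icc] at ht ⊢
  omega

open Classical in
lemma cntS_add (S : Set ℕ) {a b : ℕ} (h : a ≤ b) :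
    cntS S b = cntS S a + ((Finset.Ioc a b).filter (· ∈ S)).card := by
  unfold cntS
  rw [← Finset.card_union_of_disjoint, ← Finset.filter_union]
  · congr 1
    ext t
    simp only [Finset.mem_filter, Finset.mem_union, Finset.mem_Icc, Finset.mem_Ioc]
    constructor <;> rintro ⟨h1, h2⟩ <;> exact ⟨by omega, h2⟩
  · apply Finset.disjoint_filter_filter
    rw [Finset.disjoint_left]
    intro t ht ht'
    simp only [Finset.mem_Icc] at ht
    simp only [Finset.mem_Ioc] at ht'
    omega

open Classical in
lemma cntS_run (S : Set ℕ) {m g : ℕ} (hm : 1 ≤ m) (hmg : m ≤ g)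
    (hrun : ∀ u, m ≤ u → u ≤ g → u ∈ S) : g - m + 1 ≤ cntS S g := by
  calc g - m + 1 = (Finset.Icc m g).card := by rw [Nat.card_Icc]; omega
    _ ≤ cntS S g := by
        apply Finset.card_le_card
        intro t ht
        simp only [Finset.mem_Icc] at ht
        simp only [Finset.mem_filter, Finset.mem_Icc]
        exact ⟨⟨by omega, ht.2⟩, hrun t ht.1 ht.2⟩

open Classical in
lemma cntS_const (S : Set ℕ) {a b : ℕ} (h : a ≤ b)
    (hempty : ∀ u, a < u → u ≤ b → u ∉ S) : cntS S b = cntS S a := by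
  rw [cntS_add S h]
  have : (Finset.Ioc a b).filter (· ∈ S) = ∅ := by
    apply Finset.filter_false_of_mem
    intro t ht
    simp only [Finset.mem_Ioc] at ht
    exact hempty t ht.1 ht.2
  rw [this]
  simp

open Classical in
lemma comb_lemma (S : Set ℕ) (hS : S.Infinite) (δ : ℝ) (hδ : 0 < δ) (hδ6 : δ ≤ 1/6)
    (hfreq : ∀ N : ℕ, ∃ g, N ≤ g ∧ ((cntS S g : ℝ) < 2*δ*g))
    (N : ℕ) : ∃ m, N ≤ m ∧ m ∈ S ∧ (m-1) ∉ S ∧ 2 ≤ m ∧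
      ((cntS S (m-1) : ℝ) ≤ 4*δ*((m-1 : ℕ) : ℝ)) := by
  obtain ⟨g, hgN, hgδ⟩ := hfreq (3*N + 30)
  have hg30 : 30 ≤ g := by omega
  have hgr : (3*(N:ℝ) + 30) ≤ g := by exact_mod_cast Nat.cast_le.2 hgN
  have hgpos : (0:ℝ) < g := by linarith
  have hcg3 : (cntS S g : ℝ) < g / 3 := by nlinarith
  by_cases hgS : g ∈ S
  · -- g sits in a run; find the start of the run
    have hex : ∃ t, t ≤ g ∧ ∀ u, t ≤ u → u ≤ g → u ∈ S := by
      refine ⟨g, le_rfl, fun u h1 h2 => ?_⟩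
      have : u = g := le_antisymm h2 h1
      rwa [this]
    set m := Nat.find hex with hmdef
    obtain ⟨hmg, hrun⟩ := Nat.find_spec hex
    have hmS : m ∈ S := hrun m le_rfl hmg
    have hm2 : 2 ≤ m := by
      by_contra h
      push_neg at h
      have h1 : 1 ≤ m ∨ m = 0 := by omega
      have hrun1 : ∀ u, 1 ≤ u → u ≤ g → u ∈ S := by
        intro u hu1 hug
        exact hrun u (by omega) hug
      have := cntS_run S le_rfl (by omega) hrun1
      have : (g : ℝ) ≤ (cntS S g : ℝ) := by
        have h2 : g - 1 + 1 = g := by omega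
        rw [h2] at this
        exact_mod_cast this
      linarith
    have hm1S : (m-1) ∉ S := by
      intro hmem
      have : ¬ (m - 1 ≤ g ∧ ∀ u, m - 1 ≤ u → u ≤ g → u ∈ S) :=
        Nat.find_min hex (by omega)
      apply this
      refine ⟨by omega, fun u h1 h2 => ?_⟩
      rcases Nat.lt_or_ge u m with h | h
      · have : u = m - 1 := by omega
        rwa [this]
      · exact hrun u h h2
    have hcrun := cntS_run S (by omega) hmg hrun
    have hcrunr : ((g : ℝ) - m + 1) ≤ (cntS S g : ℝ) := by
      have h3 : ((g - m + 1 : ℕ) : ℝ) = (g:ℝ) - m + 1 := by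
        push_cast [Nat.cast_sub (show m ≤ g from hmg)]; ring
      rw [← h3]
      exact_mod_cast hcrun
    have hmbig : (2/3 : ℝ) * g < m := by linarith
    have hmN : N ≤ m := by
      have : (N : ℝ) ≤ (2/3 : ℝ) * g := by linarith
      have : (N : ℝ) < m := lt_of_le_of_lt this hmbig
      exact_mod_cast Nat.cast_lt.1 (by exact_mod_cast this) |>.le
    refine ⟨m, hmN, hmS, hm1S, hm2, ?_⟩
    have hmono : (cntS S (m-1) : ℝ) ≤ (cntS S g : ℝ) := by
      exact_mod_cast cntS_mono S (by omega : m - 1 ≤ g)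
    have hgm : (g : ℝ) ≤ 2 * ((m-1:ℕ) : ℝ) := by
      have h4 : ((m-1:ℕ) : ℝ) = (m:ℝ) - 1 := by
        push_cast [Nat.cast_sub (by omega : 1 ≤ m)]; ring
      rw [h4]
      have hg6 : (6:ℝ) ≤ g := by linarith
      nlinarith
    have hfin : (cntS S (m-1) : ℝ) < 4*δ*((m-1:ℕ) : ℝ) :=
      calc (cntS S (m-1) : ℝ) ≤ (cntS S g : ℝ) := hmono
        _ < 2*δ*g := hgδ
        _ ≤ 4*δ*((m-1:ℕ) : ℝ) := by nlinarith
    exact hfin.le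
  · -- g not in S: take the next element of S after g
    have hex : ∃ t, g < t ∧ t ∈ S := by
      obtain ⟨t, htS, hgt⟩ := hS.exists_gt g
      exact ⟨t, hgt, htS⟩
    set m := Nat.find hex with hmdef
    obtain ⟨hgm, hmS⟩ := Nat.find_spec hex
    have hm2 : 2 ≤ m := by omega
    have hm1S : (m-1) ∉ S := by
      intro hmem
      rcases Nat.lt_or_ge g (m-1) with h | h
      · exact absurd ⟨h, hmem⟩ (Nat.find_min hex (by omega))
      · have : m - 1 = g := by omega
        rw [this] at hmem
        exact hgS hmem
    have hconst : cntS S (m-1) = cntS S g := by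
      apply cntS_const S (by omega : g ≤ m - 1)
      intro u hu1 hu2 huS
      exact absurd ⟨hu1, huS⟩ (Nat.find_min hex (by omega))
    refine ⟨m, by omega, hmS, hm1S, hm2, ?_⟩
    rw [hconst]
    have hgm1 : (g : ℝ) ≤ ((m-1:ℕ) : ℝ) := by exact_mod_cast Nat.cast_le.2 (by omega : g ≤ m-1)
    have hfin : (cntS S g : ℝ) < 4*δ*((m-1:ℕ) : ℝ) :=
      calc (cntS S g : ℝ) < 2*δ*g := hgδ
        _ ≤ 4*δ*((m-1:ℕ) : ℝ) := by nlinarith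
    exact hfin.le

open Classical in
lemma fdiff_eq_cntS {A : Type*} (αf βf : ℕ → A) (k : ℕ) :
    fdiff (fun i : Fin k => αf (i.val + 1)) (fun i : Fin k => βf (i.val + 1))
      = cntS {t : ℕ | αf t ≠ βf t} k := by
  unfold fdiff
  rw [← cntS_fin]
  exact congrArg Finset.card (Finset.filter_congr fun i _ => Iff.rfl)

/-- **Isolation theorem.** If a compact decoder-only Transformer eventually learns `α`,
then there is `δ > 0` such that no sequence `β` differing from `α` in infinitely many
positions with `d_H(α, β) ≤ δ` is eventually learned by `T`. -/
theorem isolation {A : Type*} [Fintype A] {d : ℕ} (T : Transformer A d)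
    (hT : T.IsCompactT) (α : ℕ → A) (hα : EventuallyLearns T α) :
    ∃ δ : ℝ, 0 < δ ∧ ∀ β : ℕ → A, {n : ℕ | α n ≠ β n}.Infinite →
      relHammingInf α β ≤ δ → ¬ EventuallyLearns T β := by
  obtain ⟨ε, hε, n₀, hlearn⟩ := hα
  obtain ⟨θ, hθ, hclose⟩ := eval_close T hT (α 0) (ε/4) (by linarith)
  refine ⟨min (θ/4) (1/6), lt_min (by linarith) (by norm_num), ?_⟩
  intro β hinf hham hβ
  set δ := min (θ/4) (1/6) with hδdef
  obtain ⟨ε', hε', n₀', hlearn'⟩ := hβ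
  have hδpos : 0 < δ := lt_min (by linarith) (by norm_num)
  have hδ6 : δ ≤ 1/6 := min_le_right _ _
  have hδθ : δ ≤ θ/4 := min_le_left _ _
  set S := {t : ℕ | α t ≠ β t} with hSdef
  have hucount : ∀ k : ℕ,
      relHamming (fun i : Fin k => α (i.val + 1)) (fun i : Fin k => β (i.val + 1))
        = (cntS S k : ℝ) / k := by
    intro k
    have h0 : relHamming (fun i : Fin k => α (i.val + 1)) (fun i : Fin k => β (i.val + 1))
        = ((fdiff (fun i : Fin k => α (i.val + 1)) (fun i : Fin k => β (i.val + 1)) : ℕ) : ℝ)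
          / k := rfl
    rw [h0, fdiff_eq_cntS]
  have hham' : Filter.liminf (fun k : ℕ => (cntS S k : ℝ)/k) Filter.atTop ≤ δ := by
    have he : (fun k : ℕ => relHamming (fun i : Fin k => α (i.val + 1))
        (fun i : Fin k => β (i.val + 1))) = fun k : ℕ => (cntS S k : ℝ)/k := funext hucount
    unfold relHammingInf at hham
    rwa [he] at hham
  have hcob : Filter.IsCoboundedUnder (· ≥ ·) Filter.atTop
      (fun k : ℕ => (cntS S k : ℝ)/k) := by
    apply Filter.isCoboundedUnder_ge_of_le Filter.atTop (x := 1)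
    intro k
    rcases Nat.eq_zero_or_pos k with h | h
    · subst h; simp
    · rw [div_le_one (by exact_mod_cast h)]
      exact_mod_cast cntS_le S k
  have hfreq0 : ∃ᶠ k in Filter.atTop, (cntS S k : ℝ)/k < 2*δ :=
    Filter.frequently_lt_of_liminf_lt hcob (lt_of_le_of_lt hham' (by linarith))
  have hfreq : ∀ N : ℕ, ∃ g, N ≤ g ∧ ((cntS S g : ℝ) < 2*δ*g) := by
    intro N
    obtain ⟨g, hgN, hg⟩ := Filter.frequently_atTop.1 hfreq0 (max N 1)
    refine ⟨g, le_trans (le_max_left _ _) hgN, ?_⟩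
    have hg1 : 1 ≤ g := le_trans (le_max_right _ _) hgN
    have hgpos : (0:ℝ) < g := by exact_mod_cast hg1
    rw [div_lt_iff₀ hgpos] at hg
    linarith
  obtain ⟨m, hmN, hmS, hm1S, hm2, hcnt⟩ := comb_lemma S hinf δ hδpos hδ6 hfreq (n₀ + n₀' + 2)
  set n := m - 2 with hndef
  have hmn : m = n + 2 := by omega
  have hn1 : n + 1 = m - 1 := by omega
  have hn₀ : n ≥ n₀ := by omega
  have hn₀' : n ≥ n₀' := by omega
  have hlast : (fun i : Fin (n+1) => α (i.val + 1)) (Fin.last n)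
      = (fun i : Fin (n+1) => β (i.val + 1)) (Fin.last n) := by
    simp only [Fin.val_last]
    rw [hn1]
    by_contra h
    exact hm1S h
  have hcard : ((fdiff (fun i : Fin (n+1) => α (i.val + 1))
      (fun i : Fin (n+1) => β (i.val + 1)) : ℕ) : ℝ) ≤ θ * ((n : ℝ) + 1) := by
    rw [fdiff_eq_cntS, ← hSdef, hn1]
    have hcast : ((m - 1 : ℕ) : ℝ) = (n : ℝ) + 1 := by
      rw [← hn1]; push_cast; ring
    rw [← hcast]
    calc (cntS S (m-1) : ℝ) ≤ 4*δ*((m-1:ℕ) : ℝ) := hcnt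
      _ ≤ θ * ((m-1:ℕ) : ℝ) := by
          apply mul_le_mul_of_nonneg_right (by linarith) (Nat.cast_nonneg _)
  have hcl := hclose n (fun i : Fin (n+1) => α (i.val + 1))
    (fun i : Fin (n+1) => β (i.val + 1)) hlast hcard
  have hmemS : α m ≠ β m := hmS
  have hba : β (n + 2) ≠ α (n + 2) := by
    rw [← hmn]; exact (Ne.symm hmemS)
  have hab : α (n + 2) ≠ β (n + 2) := by
    rw [← hmn]; exact hmemS
  have ha := hlearn n hn₀ (β (n + 2)) hba
  have hb := hlearn' n hn₀' (α (n + 2)) hab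
  have h1 := abs_le.1 (hcl (α (n + 2)))
  have h2 := abs_le.1 (hcl (β (n + 2)))
  linarith [h1.1, h1.2, h2.1, h2.2]
end

section
/- Let Σ ⊇ {0,1} be a finite alphabet. There is no compact decoder-only Transformer over Σ that eventually learns every periodic infinite sequence over Σ (a sequence α ∈ Σ^ω is periodic if there exists k ≥ 1 with α_{n+k} = α_n for all n). -/
open Finset Filter

section helpers2

section helpers
variable {d : ℕ} {ι : Type*}

lemma wavg_norm_le (t : Finset ι) (ht : t.Nonempty)
    (w : ι → ℝ) (hw : ∀ i ∈ t, 0 < w i) (v : ι → Fin d → ℝ) (M : ℝ)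
    (hv : ∀ i ∈ t, ‖v i‖ ≤ M) :
    ‖(∑ i ∈ t, w i)⁻¹ • ∑ i ∈ t, w i • v i‖ ≤ M := by
  have hW : 0 < ∑ i ∈ t, w i := Finset.sum_pos hw ht
  have h1 : ‖∑ i ∈ t, w i • v i‖ ≤ (∑ i ∈ t, w i) * M := by
    calc ‖∑ i ∈ t, w i • v i‖ ≤ ∑ i ∈ t, ‖w i • v i‖ := norm_sum_le _ _
    _ ≤ ∑ i ∈ t, w i * M := by
        refine Finset.sum_le_sum fun i hi => ?_
        rw [norm_smul, Real.norm_eq_abs, abs_of_pos (hw i hi)]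
        exact mul_le_mul_of_nonneg_left (hv i hi) (hw i hi).le
    _ = (∑ i ∈ t, w i) * M := by rw [Finset.sum_mul]
  rw [norm_smul, Real.norm_eq_abs, abs_of_pos (inv_pos.mpr hW)]
  calc (∑ i ∈ t, w i)⁻¹ * ‖∑ i ∈ t, w i • v i‖
      ≤ (∑ i ∈ t, w i)⁻¹ * ((∑ i ∈ t, w i) * M) :=
        mul_le_mul_of_nonneg_left h1 (inv_pos.mpr hW).le
  _ = M := by field_simp

lemma wavg_sub (t : Finset ι) (w w' : ι → ℝ) (v v' : ι → Fin d → ℝ)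
    (hW : (∑ i ∈ t, w i) ≠ 0) (hW' : (∑ i ∈ t, w' i) ≠ 0) :
    (∑ i ∈ t, w i) • ((∑ i ∈ t, w i)⁻¹ • ∑ i ∈ t, w i • v i
        - (∑ i ∈ t, w' i)⁻¹ • ∑ i ∈ t, w' i • v' i)
      = ∑ i ∈ t, w i • (v i - v' i)
        + ∑ i ∈ t, (w i - w' i) • (v' i - (∑ i ∈ t, w' i)⁻¹ • ∑ i ∈ t, w' i • v' i) := by
  set A' : Fin d → ℝ := (∑ i ∈ t, w' i)⁻¹ • ∑ i ∈ t, w' i • v' i with hA'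
  have h1 : (∑ i ∈ t, w i) • ((∑ i ∈ t, w i)⁻¹ • ∑ i ∈ t, w i • v i) = ∑ i ∈ t, w i • v i :=
    smul_inv_smul₀ hW _
  have h2 : (∑ i ∈ t, w' i) • A' = ∑ i ∈ t, w' i • v' i := smul_inv_smul₀ hW' _
  rw [smul_sub, h1]
  simp only [smul_sub, sub_smul, Finset.sum_sub_distrib]
  rw [← Finset.sum_smul, ← Finset.sum_smul, h2]
  abel

lemma count_card {N : ℕ} (k : ℕ) (hk : 0 < k) (j : Fin N) :
    ((Finset.univ.filter (fun i : Fin N => k ∣ i.val + 1)) ∩ Finset.Iic j).card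
      ≤ (j.val + 1) / k := by
  have := Finset.card_le_card_of_injOn (s := (Finset.univ.filter (fun i : Fin N => k ∣ i.val + 1)) ∩ Finset.Iic j)
    (t := Finset.range ((j.val + 1) / k)) (fun i => (i.val + 1) / k - 1) ?_ ?_
  · simpa using this
  · intro i hi
    simp only [Finset.mem_coe, Finset.mem_inter, Finset.mem_filter, Finset.mem_Iic, Finset.mem_univ, true_and] at hi
    obtain ⟨hdvd, hle⟩ := hi
    have h1 : 1 ≤ (i.val + 1) / k := Nat.one_le_div_iff hk |>.mpr (Nat.le_of_dvd (Nat.succ_pos _) hdvd)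
    have h2 : (i.val + 1) / k ≤ (j.val + 1) / k := Nat.div_le_div_right (by omega : i.val + 1 ≤ j.val + 1)
    simp only [Finset.mem_coe, Finset.mem_range]
    omega
  · intro i hi i' hi' h
    simp only [Finset.coe_inter, Set.mem_inter_iff, Finset.coe_filter, Set.mem_setOf_eq,
      Finset.mem_univ, true_and, Finset.mem_coe, Finset.mem_Iic] at hi hi'
    have hd : k ∣ i.val + 1 := hi.1
    have hd' : k ∣ i'.val + 1 := hi'.1
    have h1 : 1 ≤ (i.val + 1) / k := Nat.one_le_div_iff hk |>.mpr (Nat.le_of_dvd (Nat.succ_pos _) hd)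
    have h1' : 1 ≤ (i'.val + 1) / k := Nat.one_le_div_iff hk |>.mpr (Nat.le_of_dvd (Nat.succ_pos _) hd')
    simp only at h
    have : (i.val + 1) / k = (i'.val + 1) / k := by omega
    have e1 : (i.val + 1) / k * k = i.val + 1 := Nat.div_mul_cancel hd
    have e1' : (i'.val + 1) / k * k = i'.val + 1 := Nat.div_mul_cancel hd'
    have : i.val = i'.val := by rw [this] at e1; omega
    exact Fin.ext this
end helpers

section diff
variable {d : ℕ} {ι : Type*}

lemma wavg_diff_le [DecidableEq ι] (t : Finset ι) (ht : t.Nonempty) (S : Finset ι)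
    (w w' : ι → ℝ) (v v' : ι → Fin d → ℝ)
    (w0 w1 M εv εw δ : ℝ) (hw0 : 0 < w0) (hM : 0 ≤ M)
    (hεv : 0 ≤ εv) (hεw : 0 ≤ εw) (hδ : 0 ≤ δ)
    (hwb : ∀ i ∈ t, w0 ≤ w i ∧ w i ≤ w1) (hwb' : ∀ i ∈ t, w0 ≤ w' i ∧ w' i ≤ w1)
    (hv : ∀ i ∈ t, ‖v i‖ ≤ M) (hv' : ∀ i ∈ t, ‖v' i‖ ≤ M)
    (hgood : ∀ i ∈ t, i ∉ S → ‖v i - v' i‖ ≤ εv ∧ |w i - w' i| ≤ εw)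
    (hS : ((S ∩ t).card : ℝ) ≤ δ * t.card) :
    ‖(∑ i ∈ t, w i)⁻¹ • ∑ i ∈ t, w i • v i
      - (∑ i ∈ t, w' i)⁻¹ • ∑ i ∈ t, w' i • v' i‖
      ≤ (w1 * εv + 2 * M * εw + 4 * w1 * M * δ) / w0 := by
  obtain ⟨i₀, hi₀⟩ := ht
  have hw1 : 0 < w1 := lt_of_lt_of_le hw0 (le_trans (hwb i₀ hi₀).1 (hwb i₀ hi₀).2)
  have hwpos : ∀ i ∈ t, 0 < w i := fun i hi => lt_of_lt_of_le hw0 (hwb i hi).1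
  have hwpos' : ∀ i ∈ t, 0 < w' i := fun i hi => lt_of_lt_of_le hw0 (hwb' i hi).1
  have hW : 0 < ∑ i ∈ t, w i := Finset.sum_pos hwpos ⟨i₀, hi₀⟩
  have hW' : 0 < ∑ i ∈ t, w' i := Finset.sum_pos hwpos' ⟨i₀, hi₀⟩
  set A' : Fin d → ℝ := (∑ i ∈ t, w' i)⁻¹ • ∑ i ∈ t, w' i • v' i with hA'def
  have hA'M : ‖A'‖ ≤ M := wavg_norm_le t ⟨i₀, hi₀⟩ w' hwpos' v' M hv'
  have hid := wavg_sub t w w' v v' hW.ne' hW'.ne'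
  rw [← hA'def] at hid
  -- per-term bound
  set X : ℝ := w1 * εv + 2 * M * εw with hXdef
  have hterm : ∀ i ∈ t, ‖w i • (v i - v' i) + (w i - w' i) • (v' i - A')‖
      ≤ X + (if i ∈ S then 4 * w1 * M else 0) := by
    intro i hi
    have hb1 : ‖w i • (v i - v' i)‖ = w i * ‖v i - v' i‖ := by
      rw [norm_smul, Real.norm_eq_abs, abs_of_pos (hwpos i hi)]
    have hb2 : ‖(w i - w' i) • (v' i - A')‖ = |w i - w' i| * ‖v' i - A'‖ := by
      rw [norm_smul, Real.norm_eq_abs]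
    have hvA : ‖v' i - A'‖ ≤ 2 * M := by
      calc ‖v' i - A'‖ ≤ ‖v' i‖ + ‖A'‖ := norm_sub_le _ _
      _ ≤ 2 * M := by linarith [hv' i hi]
    refine le_trans (norm_add_le _ _) ?_
    rw [hb1, hb2]
    by_cases hiS : i ∈ S
    · simp only [hiS, if_true]
      have h1 : w i * ‖v i - v' i‖ ≤ w1 * (2 * M) := by
        have : ‖v i - v' i‖ ≤ 2 * M := by
          calc ‖v i - v' i‖ ≤ ‖v i‖ + ‖v' i‖ := norm_sub_le _ _
          _ ≤ 2 * M := by linarith [hv i hi, hv' i hi]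
        exact mul_le_mul (hwb i hi).2 this (norm_nonneg _) hw1.le
      have h2 : |w i - w' i| * ‖v' i - A'‖ ≤ w1 * (2 * M) := by
        have habs : |w i - w' i| ≤ w1 := by
          rw [abs_sub_le_iff]
          constructor <;> nlinarith [(hwb i hi).1, (hwb i hi).2, (hwb' i hi).1, (hwb' i hi).2]
        exact mul_le_mul habs hvA (norm_nonneg _) hw1.le
      have hX : 0 ≤ X := by positivity
      nlinarith
    · simp only [hiS, if_false, add_zero]
      have h1 : w i * ‖v i - v' i‖ ≤ w1 * εv :=
        mul_le_mul (hwb i hi).2 (hgood i hi hiS).1 (norm_nonneg _) hw1.le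
      have h2 : |w i - w' i| * ‖v' i - A'‖ ≤ εw * (2 * M) :=
        mul_le_mul (hgood i hi hiS).2 hvA (norm_nonneg _)
          (le_trans (abs_nonneg _) (hgood i hi hiS).2)
      rw [hXdef]; nlinarith
  have hsum : ‖∑ i ∈ t, w i • (v i - v' i)
      + ∑ i ∈ t, (w i - w' i) • (v' i - A')‖ ≤ (t.card : ℝ) * X + 4 * w1 * M * ((S ∩ t).card) := by
    rw [← Finset.sum_add_distrib]
    refine le_trans (norm_sum_le _ _) ?_
    refine le_trans (Finset.sum_le_sum hterm) ?_
    rw [Finset.sum_add_distrib, Finset.sum_const, nsmul_eq_mul, mul_comm (t.card:ℝ) X,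
      Finset.sum_ite_mem]
    simp only [Finset.sum_const, nsmul_eq_mul]
    rw [Finset.inter_comm]
    linarith
  have hcardpos : (0:ℝ) < t.card := by
    have : 0 < t.card := Finset.card_pos.mpr ⟨i₀, hi₀⟩
    exact_mod_cast this
  have hWlb : (t.card : ℝ) * w0 ≤ ∑ i ∈ t, w i := by
    calc (t.card : ℝ) * w0 = ∑ _i ∈ t, w0 := by rw [Finset.sum_const, nsmul_eq_mul]
    _ ≤ ∑ i ∈ t, w i := Finset.sum_le_sum fun i hi => (hwb i hi).1
  have hXδ : 0 ≤ X + 4 * w1 * M * δ := by positivity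
  have hnorm : ‖(∑ i ∈ t, w i) • ((∑ i ∈ t, w i)⁻¹ • ∑ i ∈ t, w i • v i - A')‖
      = (∑ i ∈ t, w i) * ‖(∑ i ∈ t, w i)⁻¹ • ∑ i ∈ t, w i • v i - A'‖ := by
    rw [norm_smul, Real.norm_eq_abs, abs_of_pos hW]
  rw [hid] at hnorm
  have hmain : (∑ i ∈ t, w i) * ‖(∑ i ∈ t, w i)⁻¹ • ∑ i ∈ t, w i • v i - A'‖
      ≤ (t.card : ℝ) * (X + 4 * w1 * M * δ) := by
    rw [← hnorm]
    calc _ ≤ (t.card : ℝ) * X + 4 * w1 * M * ((S ∩ t).card) := hsum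
    _ ≤ (t.card : ℝ) * X + 4 * w1 * M * (δ * t.card) := by
        have := mul_le_mul_of_nonneg_left hS (show (0:ℝ) ≤ 4 * w1 * M by positivity)
        linarith
    _ = (t.card : ℝ) * (X + 4 * w1 * M * δ) := by ring
  rw [le_div_iff₀ hw0]
  nlinarith [hmain, hWlb, hcardpos, norm_nonneg ((∑ i ∈ t, w i)⁻¹ • ∑ i ∈ t, w i • v i - A'),
    mul_le_mul_of_nonneg_right hWlb (norm_nonneg ((∑ i ∈ t, w i)⁻¹ • ∑ i ∈ t, w i • v i - A'))]

end diff
end helpers2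

lemma frac_le (a b : ℝ) (ha : 0 ≤ a) (hb : 0 ≤ b) : b * (a / (3 * (b + 1))) ≤ a / 3 := by
  rw [(mul_div_assoc b a _).symm, div_le_div_iff₀ (by linarith) (by norm_num)]
  nlinarith

lemma layer_key {d : ℕ} (L : AttentionLayer d) (hL : L.CompactPE)
    (K : Set (Fin d → ℝ)) (hK : IsCompact K) (hKne : K.Nonempty) :
    ∃ K' : Set (Fin d → ℝ), IsCompact K' ∧ K'.Nonempty ∧
      (∀ (n : ℕ) (x : Fin n → (Fin d → ℝ)), (∀ i, x i ∈ K) → ∀ j, L.apply x j ∈ K') ∧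
      (∀ ε : ℝ, 0 < ε → ∃ θ : ℝ, 0 < θ ∧ ∃ δ : ℝ, 0 < δ ∧
        ∀ (n : ℕ) (x y : Fin n → (Fin d → ℝ)) (S : Finset (Fin n)),
          (∀ i, x i ∈ K) → (∀ i, y i ∈ K) →
          (∀ i, i ∉ S → ‖x i - y i‖ ≤ θ) →
          (∀ j : Fin n, ((S ∩ Finset.Iic j).card : ℝ) ≤ δ * (j.val + 1)) →
          ∀ j, j ∉ S → ‖L.apply x j - L.apply y j‖ ≤ ε) := by
  classical
  obtain ⟨P, hPc, hP⟩ := hL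
  obtain ⟨M₀, hM₀⟩ := hK.exists_bound_of_continuousOn L.val_cont.continuousOn
  set M := max M₀ 0 with hMdef
  have hM : 0 ≤ M := le_max_right _ _
  have hMb : ∀ z ∈ K, ‖L.val z‖ ≤ M := fun z hz => le_trans (hM₀ z hz) (le_max_left _ _)
  set C := Metric.closedBall (0 : Fin d → ℝ) M with hCdef
  have hCc : IsCompact C := isCompact_closedBall _ _
  set Q : Set ((Fin d → ℝ) × (Fin d → ℝ) × (Fin d → ℝ)) := K ×ˢ (K ×ˢ P) with hQdef
  have hQc : IsCompact Q := hK.prod (hK.prod hPc)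
  have hQne : Q.Nonempty := hKne.prod (hKne.prod ⟨_, hP 0 0⟩)
  obtain ⟨q₀, hq₀Q, hq₀min⟩ := hQc.exists_isMinOn hQne
    (L.w_cont.continuousOn (s := Q))
  set w0 := L.w q₀.1 q₀.2.1 q₀.2.2 with hw0def
  have hw0 : 0 < w0 := L.w_pos _ _ _
  have hwlb : ∀ q ∈ Q, w0 ≤ L.w q.1 q.2.1 q.2.2 := fun q hq => hq₀min hq
  obtain ⟨w₁', hw₁'⟩ := hQc.exists_bound_of_continuousOn
    (L.w_cont.continuousOn (s := Q))
  set w1 := max w₁' w0 with hw1def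
  have hwub : ∀ q ∈ Q, L.w q.1 q.2.1 q.2.2 ≤ w1 := fun q hq =>
    le_trans (le_trans (le_abs_self _) (hw₁' q hq)) (le_max_left _ _)
  have hw1 : 0 < w1 := lt_of_lt_of_le hw0 (le_max_right _ _)
  have hQmem : ∀ (n : ℕ) (x : Fin n → (Fin d → ℝ)), (∀ i, x i ∈ K) →
      ∀ (i j : Fin n), (x i, x j, L.p i.val j.val) ∈ Q := by
    intro n x hx i j
    exact Set.mk_mem_prod (hx i) (Set.mk_mem_prod (hx j) (hP i.val j.val))
  have hattn : ∀ (n : ℕ) (x : Fin n → (Fin d → ℝ)), (∀ i, x i ∈ K) →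
      ∀ j, L.attn x j ∈ C := by
    intro n x hx j
    rw [hCdef, Metric.mem_closedBall, dist_zero_right]
    exact wavg_norm_le _ ⟨j, Finset.mem_Iic.mpr le_rfl⟩ _
      (fun i _ => L.w_pos _ _ _) _ M (fun i _ => hMb _ (hx i))
  refine ⟨(fun t : (Fin d → ℝ) × (Fin d → ℝ) => L.F t.1 t.2) '' (C ×ˢ K),
    (hCc.prod hK).image L.F_cont, ?_, ?_, ?_⟩
  · obtain ⟨z, hz⟩ := hKne
    exact ⟨_, ⟨(0, z), Set.mk_mem_prod (Metric.mem_closedBall_self hM) hz, rfl⟩⟩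
  · intro n x hx j
    exact ⟨(L.attn x j, x j), Set.mk_mem_prod (hattn n x hx j) (hx j), rfl⟩
  · intro ε hε
    obtain ⟨θF, hθF, hFuc⟩ := Metric.uniformContinuousOn_iff.mp
      ((hCc.prod hK).uniformContinuousOn_of_continuous L.F_cont.continuousOn) ε hε
    set η := θF / 2 with hηdef
    have hη : 0 < η := by positivity
    set εv := η * w0 / (3 * (w1 + 1)) with hεvdef
    set εw := η * w0 / (3 * (2 * M + 1)) with hεwdef
    set δ := η * w0 / (3 * (4 * w1 * M + 1)) with hδdef
    have hεv : 0 < εv := div_pos (by positivity) (by nlinarith)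
    have hεw : 0 < εw := div_pos (by positivity) (by nlinarith)
    have hδ : 0 < δ := div_pos (by positivity) (by nlinarith)
    obtain ⟨θv, hθv, hvuc⟩ := Metric.uniformContinuousOn_iff.mp
      (hK.uniformContinuousOn_of_continuous L.val_cont.continuousOn) εv hεv
    obtain ⟨θw, hθw, hwuc⟩ := Metric.uniformContinuousOn_iff.mp
      (hQc.uniformContinuousOn_of_continuous L.w_cont.continuousOn) εw hεw
    refine ⟨min (min (θv / 2) (θw / 2)) (θF / 2), by positivity, δ, hδ, ?_⟩
    set θ := min (min (θv / 2) (θw / 2)) (θF / 2) with hθdef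
    have hθv2 : θ ≤ θv / 2 := le_trans (min_le_left _ _) (min_le_left _ _)
    have hθw2 : θ ≤ θw / 2 := le_trans (min_le_left _ _) (min_le_right _ _)
    have hθF2 : θ ≤ θF / 2 := min_le_right _ _
    intro n x y S hx hy hclose hdens j hjS
    -- attention difference bound
    have hattn_diff : ‖L.attn x j - L.attn y j‖ ≤ η := by
      have hmain := wavg_diff_le (Finset.Iic j) ⟨j, Finset.mem_Iic.mpr le_rfl⟩ S
        (fun i => L.w (x i) (x j) (L.p i.val j.val))
        (fun i => L.w (y i) (y j) (L.p i.val j.val))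
        (fun i => L.val (x i)) (fun i => L.val (y i))
        w0 w1 M εv εw δ hw0 hM hεv.le hεw.le hδ.le
        (fun i _ => ⟨hwlb _ (hQmem n x hx i j), hwub _ (hQmem n x hx i j)⟩)
        (fun i _ => ⟨hwlb _ (hQmem n y hy i j), hwub _ (hQmem n y hy i j)⟩)
        (fun i _ => hMb _ (hx i)) (fun i _ => hMb _ (hy i))
        ?_ ?_
      · refine le_trans hmain ?_
        have e1 : w1 * εv ≤ η * w0 / 3 := frac_le (η * w0) w1 (by positivity) hw1.le
        have e2 : 2 * M * εw ≤ η * w0 / 3 := frac_le (η * w0) (2 * M) (by positivity) (by linarith)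
        have e3 : 4 * w1 * M * δ ≤ η * w0 / 3 := frac_le (η * w0) (4 * w1 * M) (by positivity) (by positivity)
        rw [div_le_iff₀ hw0]
        linarith
      · -- good coordinates
        intro i _ hiS
        constructor
        · have := hvuc (x i) (hx i) (y i) (hy i) (by
            rw [dist_eq_norm]
            exact lt_of_le_of_lt (le_trans (hclose i hiS) hθv2) (by linarith))
          rw [dist_eq_norm] at this
          exact this.le
        · have := hwuc (x i, x j, L.p i.val j.val) (hQmem n x hx i j)
            (y i, y j, L.p i.val j.val) (hQmem n y hy i j) (by
              rw [Prod.dist_eq, Prod.dist_eq]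
              have h1 : dist (x i) (y i) < θw := by
                rw [dist_eq_norm]
                exact lt_of_le_of_lt (le_trans (hclose i hiS) hθw2) (by linarith)
              have h2 : dist (x j) (y j) < θw := by
                rw [dist_eq_norm]
                exact lt_of_le_of_lt (le_trans (hclose j hjS) hθw2) (by linarith)
              have h3 : dist (L.p i.val j.val) (L.p i.val j.val) < θw := by
                simpa using hθw
              exact max_lt h1 (max_lt h2 h3))
          rw [Real.dist_eq] at this
          exact this.le
      · rw [Fin.card_Iic]
        push_cast
        exact hdens j
    -- conclude via F
    have hj1 : (L.attn x j, x j) ∈ C ×ˢ K := Set.mk_mem_prod (hattn n x hx j) (hx j)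
    have hj2 : (L.attn y j, y j) ∈ C ×ˢ K := Set.mk_mem_prod (hattn n y hy j) (hy j)
    have hdistj : dist ((L.attn x j, x j) : _ × _) (L.attn y j, y j) < θF := by
      rw [Prod.dist_eq]
      refine max_lt ?_ ?_
      · rw [dist_eq_norm]
        exact lt_of_le_of_lt hattn_diff (by rw [hηdef]; linarith)
      · rw [dist_eq_norm]
        exact lt_of_le_of_lt (le_trans (hclose j hjS) hθF2) (by linarith)
    have := hFuc _ hj1 _ hj2 hdistj
    rw [dist_eq_norm] at this
    exact this.le

lemma layers_key {d : ℕ} (Ls : List (AttentionLayer d)) (hLs : ∀ L ∈ Ls, L.CompactPE)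
    (K : Set (Fin d → ℝ)) (hK : IsCompact K) (hKne : K.Nonempty) :
    ∃ K' : Set (Fin d → ℝ), IsCompact K' ∧
      (∀ (n : ℕ) (x : Fin n → (Fin d → ℝ)), (∀ i, x i ∈ K) → ∀ j, applyLayers Ls x j ∈ K') ∧
      (∀ ε : ℝ, 0 < ε → ∃ θ : ℝ, 0 < θ ∧ ∃ δ : ℝ, 0 < δ ∧
        ∀ (n : ℕ) (x y : Fin n → (Fin d → ℝ)) (S : Finset (Fin n)),
          (∀ i, x i ∈ K) → (∀ i, y i ∈ K) →
          (∀ i, i ∉ S → ‖x i - y i‖ ≤ θ) →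
          (∀ j : Fin n, ((S ∩ Finset.Iic j).card : ℝ) ≤ δ * (j.val + 1)) →
          ∀ j, j ∉ S → ‖applyLayers Ls x j - applyLayers Ls y j‖ ≤ ε) := by
  induction Ls generalizing K with
  | nil =>
      refine ⟨K, hK, fun n x hx j => hx j, fun ε hε => ⟨ε, hε, 1, one_pos, ?_⟩⟩
      intro n x y S hx hy hclose hdens j hjS
      simpa [applyLayers] using hclose j hjS
  | cons L rest ih =>
      obtain ⟨K₁, hK₁c, hK₁ne, hmem₁, hcl₁⟩ :=
        layer_key L (hLs L List.mem_cons_self) K hK hKne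
      obtain ⟨K', hK'c, hmem', hcl'⟩ :=
        ih (fun L' hL' => hLs L' (List.mem_cons_of_mem _ hL')) K₁ hK₁c hK₁ne
      have happ : ∀ (n : ℕ) (x : Fin n → (Fin d → ℝ)),
          applyLayers (L :: rest) x = applyLayers rest (L.apply x) := fun n x => rfl
      refine ⟨K', hK'c, ?_, ?_⟩
      · intro n x hx j
        rw [happ]
        exact hmem' n _ (fun i => hmem₁ n x hx i) j
      · intro ε hε
        obtain ⟨θ₁, hθ₁, δ₁, hδ₁, h₁⟩ := hcl' ε hε
        obtain ⟨θ, hθ, δ₂, hδ₂, h₂⟩ := hcl₁ θ₁ hθ₁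
        refine ⟨θ, hθ, min δ₁ δ₂, lt_min hδ₁ hδ₂, ?_⟩
        intro n x y S hx hy hclose hdens j hjS
        have hd2 : ∀ j' : Fin n, ((S ∩ Finset.Iic j').card : ℝ) ≤ δ₂ * (j'.val + 1) :=
          fun j' => le_trans (hdens j')
            (mul_le_mul_of_nonneg_right (min_le_right _ _) (by positivity))
        have hd1 : ∀ j' : Fin n, ((S ∩ Finset.Iic j').card : ℝ) ≤ δ₁ * (j'.val + 1) :=
          fun j' => le_trans (hdens j')
            (mul_le_mul_of_nonneg_right (min_le_left _ _) (by positivity))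
        have hclose' : ∀ i, i ∉ S → ‖L.apply x i - L.apply y i‖ ≤ θ₁ :=
          fun i hi => h₂ n x y S hx hy hclose hd2 i hi
        rw [happ, happ]
        exact h₁ n _ _ S (hmem₁ n x hx) (hmem₁ n y hy) hclose' hd1 j hjS

/-- **Corollary.** Over an alphabet containing two distinct symbols `zero` and `one`,
no compact decoder-only Transformer eventually learns every periodic infinite sequence. -/
theorem no_transformer_learns_all_periodic {A : Type*} [Fintype A]
    (zero one : A) (h01 : zero ≠ one) :
    ¬ ∃ (d : ℕ) (T : Transformer A d), T.IsCompactT ∧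
      ∀ α : ℕ → A, (∃ k : ℕ, 1 ≤ k ∧ ∀ n : ℕ, α (n + k) = α n) →
        EventuallyLearns T α := by
  classical
  rintro ⟨d, T, ⟨⟨K0, hK0c, hK0⟩, hPEs⟩, hlearn⟩
  obtain ⟨K', hK'c, hmem, hcl⟩ := layers_key T.layers hPEs K0 hK0c ⟨_, hK0 zero 0⟩
  obtain ⟨ε, hε, n₀, hβ⟩ := hlearn (fun _ => zero) ⟨1, le_rfl, fun n => rfl⟩
  obtain ⟨θp, hθp, hproj⟩ := Metric.uniformContinuousOn_iff.mp
    (hK'c.uniformContinuousOn_of_continuous T.proj_cont.continuousOn) (ε/4) (by positivity)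
  obtain ⟨θ, hθ, δ, hδ, hnet⟩ := hcl (θp/2) (by positivity)
  obtain ⟨k, hk2, hkδ⟩ : ∃ k : ℕ, 2 ≤ k ∧ 1 / (k:ℝ) ≤ δ := by
    obtain ⟨k₀, hk₀⟩ := exists_nat_gt (1/δ)
    refine ⟨max k₀ 2, le_max_right _ _, ?_⟩
    have hkpos : (0:ℝ) < (max k₀ 2 : ℕ) := by
      have : (2:ℕ) ≤ max k₀ 2 := le_max_right _ _
      exact_mod_cast lt_of_lt_of_le (by norm_num) this
    have hk₀' : 1/δ < ((max k₀ 2 : ℕ) : ℝ) := by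
      refine lt_of_lt_of_le hk₀ ?_
      exact_mod_cast le_max_left k₀ 2
    rw [div_le_iff₀ hkpos]
    rw [div_lt_iff₀ hδ] at hk₀'
    nlinarith
  have hkpos : 0 < k := by omega
  set α : ℕ → A := fun m => if k ∣ m then one else zero with hα
  have hαper : ∃ k' : ℕ, 1 ≤ k' ∧ ∀ n : ℕ, α (n + k') = α n := by
    refine ⟨k, by omega, fun n => ?_⟩
    simp only [hα, Nat.dvd_add_self_right]
  obtain ⟨ε', hε', n₁, hαl⟩ := hlearn α hαper
  set m := max n₀ n₁ + 2 with hm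
  set n := k * m - 2 with hn
  have hkm : 2 * m ≤ k * m := Nat.mul_le_mul_right m hk2
  have hn2 : n + 2 = k * m := by omega
  have hnm : max n₀ n₁ ≤ n := by omega
  set S : Finset (Fin (n+1)) := Finset.univ.filter (fun i => k ∣ i.val + 1) with hS
  set x : Fin (n+1) → (Fin d → ℝ) := fun j => T.embed (α (j.val + 1)) j.val with hx
  set y : Fin (n+1) → (Fin d → ℝ) := fun j => T.embed zero j.val with hy
  have hxK : ∀ i, x i ∈ K0 := fun i => hK0 _ _
  have hyK : ∀ i, y i ∈ K0 := fun i => hK0 _ _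
  have hclose : ∀ i, i ∉ S → ‖x i - y i‖ ≤ θ := by
    intro i hi
    have hnd : ¬ k ∣ i.val + 1 := by simpa [hS] using hi
    have : x i = y i := by simp [hx, hy, hα, hnd]
    rw [this]
    simpa using hθ.le
  have hdens : ∀ j : Fin (n+1), ((S ∩ Finset.Iic j).card : ℝ) ≤ δ * (j.val + 1) := by
    intro j
    have h1 := count_card k hkpos j
    have h2 : (((j.val + 1) / k : ℕ) : ℝ) ≤ ((j.val + 1 : ℕ) : ℝ) / (k : ℝ) := Nat.cast_div_le
    have h3 : ((j.val + 1 : ℕ) : ℝ) / (k : ℝ) ≤ δ * (j.val + 1) := by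
      push_cast
      rw [div_eq_mul_one_div]
      calc ((j.val:ℝ) + 1) * (1/(k:ℝ)) ≤ ((j.val:ℝ) + 1) * δ :=
            mul_le_mul_of_nonneg_left hkδ (by positivity)
      _ = δ * ((j.val:ℝ) + 1) := mul_comm _ _
    calc ((S ∩ Finset.Iic j).card : ℝ) ≤ (((j.val + 1) / k : ℕ) : ℝ) := by exact_mod_cast h1
    _ ≤ ((j.val + 1 : ℕ) : ℝ) / (k : ℝ) := h2
    _ ≤ δ * (j.val + 1) := h3
  have hdvdn2 : k ∣ n + 2 := ⟨m, hn2⟩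
  have hlast : Fin.last n ∉ S := by
    simp only [hS, Finset.mem_filter, Finset.mem_univ, true_and, Fin.val_last]
    intro hdvd
    have h1 : k ∣ 1 := by
      have := Nat.dvd_sub hdvdn2 hdvd
      simpa using this
    have := Nat.le_of_dvd one_pos h1
    omega
  have hout := hnet (n+1) x y S hxK hyK hclose hdens (Fin.last n) hlast
  have hxK' := hmem (n+1) x hxK (Fin.last n)
  have hyK' := hmem (n+1) y hyK (Fin.last n)
  have hpp := hproj _ hxK' _ hyK'
    (by rw [dist_eq_norm]; exact lt_of_le_of_lt hout (by linarith))
  have hcoord : ∀ a : A,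
      |T.proj (applyLayers T.layers x (Fin.last n)) a
        - T.proj (applyLayers T.layers y (Fin.last n)) a| ≤ ε/4 := by
    intro a
    have := dist_le_pi_dist (T.proj (applyLayers T.layers x (Fin.last n)))
      (T.proj (applyLayers T.layers y (Fin.last n))) a
    rw [Real.dist_eq] at this
    exact le_trans this hpp.le
  have hu : T.eval (fun i : Fin (n+1) => α (i.val + 1))
      = T.proj (applyLayers T.layers x (Fin.last n)) := rfl
  have hv : T.eval (fun i : Fin (n+1) => (fun _ : ℕ => zero) (i.val + 1))
      = T.proj (applyLayers T.layers y (Fin.last n)) := rfl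
  have hβ' := hβ n (le_trans (le_max_left _ _) hnm) one (Ne.symm h01)
  have hαn2 : α (n + 2) = one := by simp [hα, hdvdn2]
  have hα' := hαl n (le_trans (le_max_right _ _) hnm) zero (by rw [hαn2]; exact h01)
  rw [hαn2] at hα'
  rw [hu] at hα'
  rw [hv] at hβ'
  have hc1 := hcoord one
  have hc0 := hcoord zero
  rw [abs_le] at hc1 hc0
  linarith [hc1.1, hc1.2, hc0.1, hc0.2, hα', hβ', hε, hε']
end

section
/- Let Σ be a finite alphabet, let T be a compact decoder-only Transformer over Σ, and let α ∈ Σ^ω be eventually learned by T. Then there exist δ > 0 and n₀ ∈ ℕ such that for every n ≥ n₀ and every finite sequence β ∈ Σ^n with β_n = α_n and d_H(α_1…α_n, β) ≤ δ, the token α_{n+1} is the unique maximizer of the distribution T(β), i.e., T(β)(α_{n+1}) > T(β)(σ) for every σ ∈ Σ with σ ≠ α_{n+1}. -/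
open Finset Filter

set_option linter.unnecessarySeqFocus false

lemma unif_cont_compact {X Y : Type*} [MetricSpace X] [MetricSpace Y] {K : Set X}
    (hK : IsCompact K) {f : X → Y} (hf : Continuous f) {ε : ℝ} (hε : 0 < ε) :
    ∃ η > 0, ∀ a ∈ K, ∀ b ∈ K, dist a b ≤ η → dist (f a) (f b) ≤ ε := by
  have h := hK.uniformContinuousOn_of_continuous hf.continuousOn
  rw [Metric.uniformContinuousOn_iff] at h
  obtain ⟨δ, hδ, h⟩ := h ε hε
  exact ⟨δ/2, by linarith, fun a ha b hb hab => (h a ha b hb (by linarith)).le⟩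

lemma wavg_norm {d : ℕ} {ι : Type*} (s : Finset ι) (hs : s.Nonempty) (w : ι → ℝ)
    (v : ι → Fin d → ℝ) (hw : ∀ i ∈ s, 0 < w i) {V : ℝ} (hV : ∀ i ∈ s, ‖v i‖ ≤ V) :
    ‖(∑ i ∈ s, w i)⁻¹ • ∑ i ∈ s, w i • v i‖ ≤ V := by
  have hW : 0 < ∑ i ∈ s, w i := Finset.sum_pos hw hs
  have h1 : ‖∑ i ∈ s, w i • v i‖ ≤ ∑ i ∈ s, w i * V := by
    refine (norm_sum_le _ _).trans (Finset.sum_le_sum fun i hi => ?_)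
    rw [norm_smul, Real.norm_eq_abs, abs_of_pos (hw i hi)]
    exact mul_le_mul_of_nonneg_left (hV i hi) (hw i hi).le
  rw [norm_smul, Real.norm_eq_abs, abs_of_pos (inv_pos.mpr hW)]
  calc (∑ i ∈ s, w i)⁻¹ * ‖∑ i ∈ s, w i • v i‖
      ≤ (∑ i ∈ s, w i)⁻¹ * ((∑ i ∈ s, w i) * V) := by
        rw [Finset.sum_mul]
        exact mul_le_mul_of_nonneg_left h1 (inv_pos.mpr hW).le
    _ = V := by field_simp

lemma wavg_identity {d : ℕ} {ι : Type*} (s : Finset ι) (w w' : ι → ℝ) (v v' : ι → Fin d → ℝ)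
    (hW : (∑ i ∈ s, w i) ≠ 0) (hW' : (∑ i ∈ s, w' i) ≠ 0) :
    (∑ i ∈ s, w i)⁻¹ • ∑ i ∈ s, w i • v i - (∑ i ∈ s, w' i)⁻¹ • ∑ i ∈ s, w' i • v' i
    = (∑ i ∈ s, w' i)⁻¹ •
      ∑ i ∈ s, ((w' i - w i) • ((∑ i ∈ s, w i)⁻¹ • ∑ i ∈ s, w i • v i - v i)
        + w' i • (v i - v' i)) := by
  set a := (∑ i ∈ s, w i)⁻¹ • ∑ i ∈ s, w i • v i with ha
  have hsum : ∑ i ∈ s, ((w' i - w i) • (a - v i) + w' i • (v i - v' i))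
      = (∑ i ∈ s, w' i) • a - ∑ i ∈ s, w' i • v' i := by
    have hwa : ∑ i ∈ s, w i • v i = (∑ i ∈ s, w i) • a := by
      rw [ha, smul_inv_smul₀ hW]
    simp only [sub_smul, smul_sub, Finset.sum_add_distrib, Finset.sum_sub_distrib, ← Finset.sum_smul]
    rw [hwa]
    abel
  rw [hsum, smul_sub, inv_smul_smul₀ hW']
lemma wavg_diff_norm {d : ℕ} {ι : Type*} (s : Finset ι) (hs : s.Nonempty)
    (w w' : ι → ℝ) (v v' : ι → Fin d → ℝ)
    (hw : ∀ i ∈ s, 0 < w i) (hw' : ∀ i ∈ s, 0 < w' i)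
    {V : ℝ} (hV : ∀ i ∈ s, ‖v i‖ ≤ V) :
    ‖(∑ i ∈ s, w i)⁻¹ • ∑ i ∈ s, w i • v i - (∑ i ∈ s, w' i)⁻¹ • ∑ i ∈ s, w' i • v' i‖
    ≤ (∑ i ∈ s, w' i)⁻¹ * ∑ i ∈ s, (2 * V * |w i - w' i| + w' i * ‖v i - v' i‖) := by
  have hW : 0 < ∑ i ∈ s, w i := Finset.sum_pos hw hs
  have hW' : 0 < ∑ i ∈ s, w' i := Finset.sum_pos hw' hs
  set a := (∑ i ∈ s, w i)⁻¹ • ∑ i ∈ s, w i • v i with ha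
  have hanorm : ‖a‖ ≤ V := wavg_norm s hs w v hw hV
  rw [wavg_identity s w w' v v' hW.ne' hW'.ne', norm_smul, Real.norm_eq_abs,
    abs_of_pos (inv_pos.mpr hW')]
  refine mul_le_mul_of_nonneg_left ?_ (inv_pos.mpr hW').le
  refine (norm_sum_le _ _).trans (Finset.sum_le_sum fun i hi => ?_)
  refine (norm_add_le _ _).trans ?_
  have h1 : ‖(w' i - w i) • (a - v i)‖ ≤ 2 * V * |w i - w' i| := by
    rw [norm_smul, Real.norm_eq_abs, abs_sub_comm]
    have : ‖a - v i‖ ≤ 2 * V := by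
      refine (norm_sub_le _ _).trans ?_
      have := hV i hi; linarith
    calc |w i - w' i| * ‖a - v i‖ ≤ |w i - w' i| * (2 * V) :=
          mul_le_mul_of_nonneg_left this (abs_nonneg _)
      _ = 2 * V * |w i - w' i| := by ring
  have h2 : ‖w' i • (v i - v' i)‖ = w' i * ‖v i - v' i‖ := by
    rw [norm_smul, Real.norm_eq_abs, abs_of_pos (hw' i hi)]
  linarith

lemma card_low {n : ℕ} (j : Fin n) {c : ℝ} (hc : 0 ≤ c) :
    (((Finset.Iic j).filter (fun i => ((i.val : ℝ) + 1) < c)).card : ℝ) ≤ c := by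
  have hsub : ((Finset.Iic j).filter (fun i => ((i.val : ℝ) + 1) < c)).card ≤ ⌊c⌋₊ := by
    have : ∀ i ∈ (Finset.Iic j).filter (fun i => ((i.val : ℝ) + 1) < c),
        i.val ∈ Finset.range ⌊c⌋₊ := by
      intro i hi
      rw [Finset.mem_filter] at hi
      rw [Finset.mem_range]
      have : ((i.val + 1 : ℕ) : ℝ) ≤ c := by push_cast; linarith [hi.2]
      have := Nat.le_floor this
      omega
    calc ((Finset.Iic j).filter _).card
        = (((Finset.Iic j).filter (fun i => ((i.val : ℝ) + 1) < c)).image Fin.val).card := by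
          rw [Finset.card_image_of_injective _ Fin.val_injective]
      _ ≤ (Finset.range ⌊c⌋₊).card := by
          apply Finset.card_le_card
          intro k hk
          obtain ⟨i, hi, rfl⟩ := Finset.mem_image.mp hk
          exact this i hi
      _ = ⌊c⌋₊ := Finset.card_range _
  calc (_ : ℝ) ≤ (⌊c⌋₊ : ℝ) := by exact_mod_cast hsub
    _ ≤ c := Nat.floor_le hc

lemma layer_stable {d : ℕ} (L : AttentionLayer d) {K : Set (Fin d → ℝ)} (hK : IsCompact K)
    (hne : K.Nonempty) :
    ∃ K' : Set (Fin d → ℝ), IsCompact K' ∧ K'.Nonempty ∧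
      ∀ (n : ℕ) (x : Fin n → Fin d → ℝ), (∀ i, x i ∈ K) → ∀ j, L.apply x j ∈ K' := by
  obtain ⟨V, hV⟩ := hK.exists_bound_of_continuousOn L.val_cont.continuousOn
  set V' := max V 0 with hV'def
  refine ⟨(fun t : (Fin d → ℝ) × (Fin d → ℝ) => L.F t.1 t.2) ''
      (Metric.closedBall 0 V' ×ˢ K), ((isCompact_closedBall _ _).prod hK).image L.F_cont,
    (Set.Nonempty.prod ⟨0, Metric.mem_closedBall_self (le_max_right V 0)⟩ hne).image _, ?_⟩
  intro n x hx j
  refine ⟨(L.attn x j, x j), ⟨?_, hx j⟩, rfl⟩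
  rw [Metric.mem_closedBall, dist_zero_right]
  exact wavg_norm _ ⟨j, Finset.mem_Iic.mpr le_rfl⟩ _ _ (fun i _ => L.w_pos _ _ _)
    (fun i _ => (hV _ (hx i)).trans (le_max_left V 0))

lemma single_layer {d : ℕ} (L : AttentionLayer d) (hL : L.CompactPE)
    {K : Set (Fin d → ℝ)} (hK : IsCompact K) (hne : K.Nonempty)
    {ε : ℝ} (hε : 0 < ε) :
    ∃ η > 0, ∃ θ > 0, ∀ (n : ℕ) (x x' : Fin n → Fin d → ℝ),
      (∀ i, x i ∈ K) → (∀ i, x' i ∈ K) → ∀ j : Fin n,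
      (((Finset.Iic j).filter (fun i => ¬ ‖x i - x' i‖ ≤ η)).card : ℝ) ≤ θ * (j.val + 1) →
      ‖x j - x' j‖ ≤ η → ‖L.apply x j - L.apply x' j‖ ≤ ε := by
  classical
  obtain ⟨P, hPc, hP⟩ := hL
  obtain ⟨V, hV⟩ := hK.exists_bound_of_continuousOn L.val_cont.continuousOn
  set V' := max V 1 with hV'def
  have hV'pos : (0:ℝ) < V' := lt_of_lt_of_le one_pos (le_max_right _ _)
  have hVal : ∀ y ∈ K, ‖L.val y‖ ≤ V' := fun y hy => (hV y hy).trans (le_max_left _ _)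
  have hPne : P.Nonempty := ⟨L.p 0 0, hP 0 0⟩
  have hCc : IsCompact (K ×ˢ (K ×ˢ P)) := hK.prod (hK.prod hPc)
  obtain ⟨wmax, hwmax⟩ := hCc.exists_bound_of_continuousOn L.w_cont.continuousOn
  set wmax' := max wmax 1 with hwmax'def
  have hwmax'pos : (0:ℝ) < wmax' := lt_of_lt_of_le one_pos (le_max_right _ _)
  have hwub : ∀ t ∈ K ×ˢ (K ×ˢ P), L.w t.1 t.2.1 t.2.2 ≤ wmax' := fun t ht =>
    (le_abs_self _).trans ((hwmax t ht).trans (le_max_left _ _))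
  obtain ⟨t₀, ht₀, hmin⟩ := hCc.exists_isMinOn (hne.prod (hne.prod hPne))
    L.w_cont.continuousOn
  set wmin := L.w t₀.1 t₀.2.1 t₀.2.2 with hwmindef
  have hwminpos : 0 < wmin := L.w_pos _ _ _
  have hwlb : ∀ t ∈ K ×ˢ (K ×ˢ P), wmin ≤ L.w t.1 t.2.1 t.2.2 := fun t ht => hmin ht
  -- uniform continuity of F
  obtain ⟨ηF, hηF, hF⟩ := unif_cont_compact
    ((isCompact_closedBall (0 : Fin d → ℝ) V').prod hK) L.F_cont hε
  -- target moduli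
  have hεw : (0:ℝ) < wmin * ηF / (6 * V') := by positivity
  have hεv : (0:ℝ) < wmin * ηF / (3 * wmax') := by positivity
  obtain ⟨ηw, hηw, hwuc⟩ := unif_cont_compact hCc L.w_cont hεw
  obtain ⟨ηv, hηv, hvuc⟩ := unif_cont_compact hK L.val_cont hεv
  refine ⟨min ηw (min ηv ηF), by positivity, wmin * ηF / (12 * V' * wmax'), by positivity, ?_⟩
  set η := min ηw (min ηv ηF) with hηdef
  set θ := wmin * ηF / (12 * V' * wmax') with hθdef
  intro n x x' hx hx' j hcount hj
  set s := Finset.Iic j with hsdef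
  have hsne : s.Nonempty := ⟨j, Finset.mem_Iic.mpr le_rfl⟩
  set w : Fin n → ℝ := fun i => L.w (x i) (x j) (L.p i.val j.val) with hwdef
  set w' : Fin n → ℝ := fun i => L.w (x' i) (x' j) (L.p i.val j.val) with hw'def
  set v : Fin n → (Fin d → ℝ) := fun i => L.val (x i) with hvdef
  set v' : Fin n → (Fin d → ℝ) := fun i => L.val (x' i) with hv'def
  have hmemC : ∀ i : Fin n, (x i, x j, L.p i.val j.val) ∈ K ×ˢ (K ×ˢ P) :=
    fun i => ⟨hx i, hx j, hP _ _⟩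
  have hmemC' : ∀ i : Fin n, (x' i, x' j, L.p i.val j.val) ∈ K ×ˢ (K ×ˢ P) :=
    fun i => ⟨hx' i, hx' j, hP _ _⟩
  have hwpos : ∀ i ∈ s, 0 < w i := fun i _ => L.w_pos _ _ _
  have hw'pos : ∀ i ∈ s, 0 < w' i := fun i _ => L.w_pos _ _ _
  have hvb : ∀ i ∈ s, ‖v i‖ ≤ V' := fun i _ => hVal _ (hx i)
  have hW' : 0 < ∑ i ∈ s, w' i := Finset.sum_pos hw'pos hsne
  have hW'lb : wmin * (j.val + 1) ≤ ∑ i ∈ s, w' i := by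
    calc wmin * (j.val + 1) = ∑ _i ∈ s, wmin := by
          rw [Finset.sum_const, Fin.card_Iic, nsmul_eq_mul]; push_cast; ring
      _ ≤ ∑ i ∈ s, w' i := Finset.sum_le_sum fun i _ => hwlb _ (hmemC' i)
  -- pointwise bound on the sum terms
  have hterm : ∀ i ∈ s, 2 * V' * |w i - w' i| + w' i * ‖v i - v' i‖
      ≤ (2 * V' * (wmin * ηF / (6 * V')) + wmax' * (wmin * ηF / (3 * wmax')))
        + (if ¬ ‖x i - x' i‖ ≤ η then 4 * V' * wmax' else 0) := by
    intro i hi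
    by_cases hgood : ‖x i - x' i‖ ≤ η
    · simp only [hgood, not_true_eq_false, if_false]
      have hdw : |w i - w' i| ≤ wmin * ηF / (6 * V') := by
        have hd : dist (x i, x j, L.p i.val j.val) (x' i, x' j, L.p i.val j.val) ≤ ηw := by
          rw [Prod.dist_eq, Prod.dist_eq]
          simp only [dist_self]
          have h1 : dist (x i) (x' i) ≤ ηw := by
            rw [dist_eq_norm]; exact hgood.trans (min_le_left _ _)
          have h2 : dist (x j) (x' j) ≤ ηw := by
            rw [dist_eq_norm]; exact hj.trans (min_le_left _ _)
          exact max_le h1 (max_le h2 (le_of_lt hηw))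
        have := hwuc _ (hmemC i) _ (hmemC' i) hd
        rwa [Real.dist_eq] at this
      have hdv : ‖v i - v' i‖ ≤ wmin * ηF / (3 * wmax') := by
        have hd : dist (x i) (x' i) ≤ ηv := by
          rw [dist_eq_norm]; exact hgood.trans ((min_le_right _ _).trans (min_le_left _ _))
        have := hvuc _ (hx i) _ (hx' i) hd
        rwa [dist_eq_norm] at this
      have h1 : 2 * V' * |w i - w' i| ≤ 2 * V' * (wmin * ηF / (6 * V')) := by
        apply mul_le_mul_of_nonneg_left hdw; positivity
      have h2 : w' i * ‖v i - v' i‖ ≤ wmax' * (wmin * ηF / (3 * wmax')) := by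
        apply mul_le_mul (hwub _ (hmemC' i)) hdv (norm_nonneg _) hwmax'pos.le
      linarith
    · simp only [hgood, not_false_eq_true, if_true]
      have hdw : |w i - w' i| ≤ wmax' := by
        have h1 : w' i ≤ wmax' := hwub _ (hmemC' i)
        have h2 : w i ≤ wmax' := hwub _ (hmemC i)
        have h3 : 0 < w i := L.w_pos _ _ _
        have h4 : 0 < w' i := L.w_pos _ _ _
        rw [abs_le]; constructor <;> linarith
      have hdv : ‖v i - v' i‖ ≤ 2 * V' := by
        have := hVal _ (hx i); have := hVal _ (hx' i)
        have := norm_sub_le (v i) (v' i)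
        simp only [hvdef, hv'def] at *
        linarith
      have h1 : 2 * V' * |w i - w' i| ≤ 2 * V' * wmax' := by
        apply mul_le_mul_of_nonneg_left hdw; positivity
      have h2 : w' i * ‖v i - v' i‖ ≤ wmax' * (2 * V') := by
        apply mul_le_mul (hwub _ (hmemC' i)) hdv (norm_nonneg _) hwmax'pos.le
      have h3 : 0 ≤ 2 * V' * (wmin * ηF / (6 * V')) + wmax' * (wmin * ηF / (3 * wmax')) := by
        positivity
      nlinarith [hwmax'pos, hV'pos]
  -- sum the bounds
  have hsum : ∑ i ∈ s, (2 * V' * |w i - w' i| + w' i * ‖v i - v' i‖)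
      ≤ (j.val + 1) * (2 * V' * (wmin * ηF / (6 * V')) + wmax' * (wmin * ηF / (3 * wmax')))
        + (((s.filter (fun i => ¬ ‖x i - x' i‖ ≤ η)).card : ℝ)) * (4 * V' * wmax') := by
    calc ∑ i ∈ s, (2 * V' * |w i - w' i| + w' i * ‖v i - v' i‖)
        ≤ ∑ i ∈ s, ((2 * V' * (wmin * ηF / (6 * V')) + wmax' * (wmin * ηF / (3 * wmax')))
          + (if ¬ ‖x i - x' i‖ ≤ η then 4 * V' * wmax' else 0)) := Finset.sum_le_sum hterm
      _ = (j.val + 1) * (2 * V' * (wmin * ηF / (6 * V')) + wmax' * (wmin * ηF / (3 * wmax')))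
          + (((s.filter (fun i => ¬ ‖x i - x' i‖ ≤ η)).card : ℝ)) * (4 * V' * wmax') := by
          rw [Finset.sum_add_distrib, Finset.sum_const, Fin.card_Iic, nsmul_eq_mul]
          congr 1
          · push_cast; ring
          · rw [← Finset.sum_filter, Finset.sum_const, nsmul_eq_mul]
  have hsum2 : ∑ i ∈ s, (2 * V' * |w i - w' i| + w' i * ‖v i - v' i‖)
      ≤ (j.val + 1) * (wmin * ηF) := by
    have hc : (((s.filter (fun i => ¬ ‖x i - x' i‖ ≤ η)).card : ℝ)) * (4 * V' * wmax')
        ≤ θ * (j.val + 1) * (4 * V' * wmax') := by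
      apply mul_le_mul_of_nonneg_right hcount; positivity
    have e1 : 2 * V' * (wmin * ηF / (6 * V')) = wmin * ηF / 3 := by
      field_simp; ring
    have e2 : wmax' * (wmin * ηF / (3 * wmax')) = wmin * ηF / 3 := by
      field_simp
    have e3 : θ * (4 * V' * wmax') = wmin * ηF / 3 := by
      rw [hθdef]; field_simp; ring
    have hj1 : (0:ℝ) ≤ (j.val : ℝ) + 1 := by positivity
    calc ∑ i ∈ s, (2 * V' * |w i - w' i| + w' i * ‖v i - v' i‖)
        ≤ (j.val + 1) * (2 * V' * (wmin * ηF / (6 * V')) + wmax' * (wmin * ηF / (3 * wmax')))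
          + θ * (j.val + 1) * (4 * V' * wmax') := by linarith [hsum, hc]
      _ = (j.val + 1) * (wmin * ηF) := by
          rw [e1, e2]
          calc ((j.val:ℝ) + 1) * (wmin * ηF / 3 + wmin * ηF / 3) + θ * ((j.val:ℝ) + 1) * (4 * V' * wmax')
              = ((j.val:ℝ) + 1) * (wmin * ηF / 3 + wmin * ηF / 3) + ((j.val:ℝ)+1) * (θ * (4 * V' * wmax')) := by ring
            _ = ((j.val:ℝ) + 1) * (wmin * ηF) := by rw [e3]; ring
  -- attention vectors are close
  have hattn : ‖L.attn x j - L.attn x' j‖ ≤ ηF := by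
    have hkey := wavg_diff_norm s hsne w w' v v' hwpos hw'pos hvb
    have : L.attn x j = (∑ i ∈ s, w i)⁻¹ • ∑ i ∈ s, w i • v i := rfl
    rw [this]
    have : L.attn x' j = (∑ i ∈ s, w' i)⁻¹ • ∑ i ∈ s, w' i • v' i := rfl
    rw [this]
    refine hkey.trans ?_
    have hpos1 : (0:ℝ) < wmin * ((j.val:ℝ) + 1) := by positivity
    have hinv : (∑ i ∈ s, w' i)⁻¹ ≤ (wmin * ((j.val:ℝ) + 1))⁻¹ :=
      inv_anti₀ hpos1 hW'lb
    have hsnn : (0:ℝ) ≤ ∑ i ∈ s, (2 * V' * |w i - w' i| + w' i * ‖v i - v' i‖) := by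
      apply Finset.sum_nonneg
      intro i hi
      have := (hw'pos i hi)
      positivity
    calc (∑ i ∈ s, w' i)⁻¹ * ∑ i ∈ s, (2 * V' * |w i - w' i| + w' i * ‖v i - v' i‖)
        ≤ (wmin * ((j.val:ℝ) + 1))⁻¹ * (((j.val:ℝ) + 1) * (wmin * ηF)) := by
          apply mul_le_mul hinv hsum2 hsnn (by positivity)
      _ = ηF := by field_simp
  -- conclude via uniform continuity of F
  have hamem : (L.attn x j, x j) ∈ Metric.closedBall (0 : Fin d → ℝ) V' ×ˢ K := by
    refine ⟨?_, hx j⟩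
    rw [Metric.mem_closedBall, dist_zero_right]
    exact wavg_norm s hsne w v hwpos hvb
  have hamem' : (L.attn x' j, x' j) ∈ Metric.closedBall (0 : Fin d → ℝ) V' ×ˢ K := by
    refine ⟨?_, hx' j⟩
    rw [Metric.mem_closedBall, dist_zero_right]
    exact wavg_norm s hsne w' v' hw'pos (fun i _ => hVal _ (hx' i))
  have hd : dist (L.attn x j, x j) (L.attn x' j, x' j) ≤ ηF := by
    rw [Prod.dist_eq]
    refine max_le ?_ ?_
    · rw [dist_eq_norm]; exact hattn
    · rw [dist_eq_norm]; exact hj.trans ((min_le_right _ _).trans (min_le_right _ _))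
  have := hF _ hamem _ hamem' hd
  rw [dist_eq_norm] at this
  exact this

lemma multilayer {d : ℕ} (Ls : List (AttentionLayer d)) {K : Set (Fin d → ℝ)}
    (hK : IsCompact K) (hne : K.Nonempty) (hLs : ∀ L ∈ Ls, L.CompactPE)
    {ε : ℝ} (hε : 0 < ε) :
    ∃ η > 0, ∃ θ > 0, ∀ (n : ℕ) (x x' : Fin n → Fin d → ℝ),
      (∀ i, x i ∈ K) → (∀ i, x' i ∈ K) → ∀ j : Fin n,
      (((Finset.Iic j).filter (fun i => ¬ ‖x i - x' i‖ ≤ η)).card : ℝ) ≤ θ * (j.val + 1) →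
      ‖x j - x' j‖ ≤ η →
      ‖applyLayers Ls x j - applyLayers Ls x' j‖ ≤ ε := by
  induction Ls generalizing K with
  | nil =>
    exact ⟨ε, hε, 1, one_pos, fun n x x' _ _ j _ hj => by
      simpa only [applyLayers, List.foldl_nil] using hj⟩
  | cons L Ls ih =>
    have hLpe : L.CompactPE := hLs L List.mem_cons_self
    obtain ⟨K₁, hK₁c, hK₁ne, hK₁⟩ := layer_stable L hK hne
    obtain ⟨η', hη', θ', hθ', hIH⟩ :=
      ih hK₁c hK₁ne (fun L' hL' => hLs L' (List.mem_cons_of_mem _ hL'))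
    obtain ⟨η, hη, θ₁, hθ₁, hSL⟩ := single_layer L hLpe hK hne hη'
    refine ⟨η, hη, min θ₁ (θ' * θ₁ / (θ₁ + 1)), by positivity, ?_⟩
    set θ := min θ₁ (θ' * θ₁ / (θ₁ + 1)) with hθdef
    have hθpos : 0 < θ := by positivity
    intro n x x' hx hx' j hcount hj
    set y := L.apply x with hydef
    set y' := L.apply x' with hy'def
    have happ : applyLayers (L :: Ls) x = applyLayers Ls y := rfl
    have happ' : applyLayers (L :: Ls) x' = applyLayers Ls y' := rfl
    rw [happ, happ']
    have hθθ₁ : θ ≤ θ₁ := min_le_left _ _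
    have hcount₁ : ∀ i : Fin n, i ≤ j → θ * ((j.val:ℝ) + 1) / θ₁ ≤ (i.val:ℝ) + 1 →
        (((Finset.Iic i).filter (fun k => ¬ ‖x k - x' k‖ ≤ η)).card : ℝ)
          ≤ θ₁ * (i.val + 1) := by
      intro i hij hlow
      calc (((Finset.Iic i).filter (fun k => ¬ ‖x k - x' k‖ ≤ η)).card : ℝ)
          ≤ (((Finset.Iic j).filter (fun k => ¬ ‖x k - x' k‖ ≤ η)).card : ℝ) := by
            exact_mod_cast Finset.card_le_card
              (Finset.filter_subset_filter _ (Finset.Iic_subset_Iic.mpr hij))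
        _ ≤ θ * ((j.val:ℝ) + 1) := hcount
        _ ≤ θ₁ * ((i.val:ℝ) + 1) := by
            have : θ * ((j.val:ℝ) + 1) = θ₁ * (θ * ((j.val:ℝ) + 1) / θ₁) := by
              field_simp
            rw [this]
            exact mul_le_mul_of_nonneg_left hlow hθ₁.le
    -- the bad set for y is contained in bad_x ∪ low
    have hsubset : (Finset.Iic j).filter (fun i => ¬ ‖y i - y' i‖ ≤ η')
        ⊆ ((Finset.Iic j).filter (fun i => ¬ ‖x i - x' i‖ ≤ η)) ∪
          ((Finset.Iic j).filter (fun i => ((i.val:ℝ) + 1) < θ * ((j.val:ℝ) + 1) / θ₁)) := by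
      intro i hi
      rw [Finset.mem_filter] at hi
      rw [Finset.mem_union, Finset.mem_filter, Finset.mem_filter]
      by_contra hcon
      push_neg at hcon
      obtain ⟨h1, h2⟩ := hcon
      have hgx : ‖x i - x' i‖ ≤ η := by
        by_contra hh; exact absurd (h1 hi.1) (by simpa using hh)
      have hlow : θ * ((j.val:ℝ) + 1) / θ₁ ≤ (i.val:ℝ) + 1 := h2 hi.1
      have := hSL n x x' hx hx' i
        (hcount₁ i (Finset.mem_Iic.mp hi.1) hlow) hgx
      exact hi.2 this
    have hyK : ∀ i, y i ∈ K₁ := fun i => hK₁ n x hx i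
    have hy'K : ∀ i, y' i ∈ K₁ := fun i => hK₁ n x' hx' i
    apply hIH n y y' hyK hy'K j ?_ ?_
    · -- count bound for y
      have hc1 : (((Finset.Iic j).filter (fun i => ¬ ‖y i - y' i‖ ≤ η')).card : ℝ)
          ≤ (((Finset.Iic j).filter (fun i => ¬ ‖x i - x' i‖ ≤ η)).card : ℝ)
            + (((Finset.Iic j).filter
                (fun i => ((i.val:ℝ) + 1) < θ * ((j.val:ℝ) + 1) / θ₁)).card : ℝ) := by
        have := Finset.card_le_card hsubset
        have h2 := Finset.card_union_le
          ((Finset.Iic j).filter (fun i => ¬ ‖x i - x' i‖ ≤ η))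
          ((Finset.Iic j).filter (fun i => ((i.val:ℝ) + 1) < θ * ((j.val:ℝ) + 1) / θ₁))
        exact_mod_cast le_trans this h2
      have hc2 : (((Finset.Iic j).filter
          (fun i => ((i.val:ℝ) + 1) < θ * ((j.val:ℝ) + 1) / θ₁)).card : ℝ)
          ≤ θ * ((j.val:ℝ) + 1) / θ₁ := card_low j (by positivity)
      have hfin : θ * ((j.val:ℝ) + 1) + θ * ((j.val:ℝ) + 1) / θ₁ ≤ θ' * ((j.val:ℝ) + 1) := by
        have hθle : θ ≤ θ' * θ₁ / (θ₁ + 1) := min_le_right _ _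
        have hj1 : (0:ℝ) ≤ (j.val:ℝ) + 1 := by positivity
        have : θ * (1 + 1 / θ₁) ≤ θ' := by
          rw [le_div_iff₀ (by positivity)] at hθle
          rw [← sub_nonneg]
          have expand : θ' - θ * (1 + 1/θ₁) = (θ' * θ₁ - θ * (θ₁ + 1)) / θ₁ := by
            field_simp
          rw [expand]
          apply div_nonneg _ hθ₁.le
          linarith
        calc θ * ((j.val:ℝ) + 1) + θ * ((j.val:ℝ) + 1) / θ₁
            = (θ * (1 + 1/θ₁)) * ((j.val:ℝ) + 1) := by field_simp
          _ ≤ θ' * ((j.val:ℝ) + 1) := mul_le_mul_of_nonneg_right this hj1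
      calc (((Finset.Iic j).filter (fun i => ¬ ‖y i - y' i‖ ≤ η')).card : ℝ)
          ≤ _ + _ := hc1
        _ ≤ θ * ((j.val:ℝ) + 1) + θ * ((j.val:ℝ) + 1) / θ₁ := add_le_add hcount hc2
        _ ≤ θ' * ((j.val:ℝ) + 1) := hfin
    · -- last position close
      exact hSL n x x' hx hx' j
        (hcount.trans (mul_le_mul_of_nonneg_right hθθ₁ (by positivity))) hj
lemma layers_stable {d : ℕ} (Ls : List (AttentionLayer d)) {K : Set (Fin d → ℝ)}
    (hK : IsCompact K) (hne : K.Nonempty) :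
    ∃ K' : Set (Fin d → ℝ), IsCompact K' ∧ K'.Nonempty ∧
      ∀ (n : ℕ) (x : Fin n → Fin d → ℝ), (∀ i, x i ∈ K) → ∀ j, applyLayers Ls x j ∈ K' := by
  induction Ls generalizing K with
  | nil => exact ⟨K, hK, hne, fun n x hx j => hx j⟩
  | cons L Ls ih =>
    obtain ⟨K₁, hK₁c, hK₁ne, hK₁⟩ := layer_stable L hK hne
    obtain ⟨K₂, hK₂c, hK₂ne, hK₂⟩ := ih hK₁c hK₁ne
    exact ⟨K₂, hK₂c, hK₂ne, fun n x hx j => hK₂ n (L.apply x) (fun i => hK₁ n x hx i) j⟩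

/-- **Representational collapse.** If `T` eventually learns `α`, then there exist `δ > 0`
and `n₀` such that for every `n ≥ n₀` and every length-`n` sequence `β` with the same last
token as the length-`n` prefix of `α` and relative Hamming distance at most `δ` from it,
the next token of `α` is the unique maximizer of `T(β)`. -/
theorem representational_collapse {A : Type*} [Fintype A] {d : ℕ} (T : Transformer A d)
    (hT : T.IsCompactT) (α : ℕ → A) (hα : EventuallyLearns T α) :
    ∃ δ : ℝ, 0 < δ ∧ ∃ n₀ : ℕ, ∀ n ≥ n₀, ∀ β : Fin (n + 1) → A,
      β (Fin.last n) = α (n + 1) →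
      relHamming (fun i : Fin (n + 1) => α (i.val + 1)) β ≤ δ →
      ∀ σ : A, σ ≠ α (n + 2) → T.eval β σ < T.eval β (α (n + 2)) := by
  classical
  rcases isEmpty_or_nonempty A with hA | hA
  · exact ⟨1, one_pos, 0, fun n _ β _ _ _ _ => (hA.false (β 0)).elim⟩
  obtain ⟨⟨K₀, hK₀c, hK₀⟩, hPEs⟩ := hT
  obtain ⟨ε, hε, n₁, hlearn⟩ := hα
  have hK₀ne : K₀.Nonempty := ⟨T.embed (Classical.arbitrary A) 0, hK₀ _ _⟩
  obtain ⟨Kf, hKfc, _, hKf⟩ := layers_stable T.layers hK₀c hK₀ne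
  obtain ⟨ηP, hηP, hproj⟩ := unif_cont_compact hKfc T.proj_cont
    (show (0:ℝ) < ε/3 by positivity)
  obtain ⟨η, hη, θ, hθ, hML⟩ := multilayer T.layers hK₀c hK₀ne hPEs hηP
  refine ⟨θ, hθ, n₁, ?_⟩
  intro n hn β hlast hham σ hσ
  set x : Fin (n+1) → Fin d → ℝ := fun j => T.embed (α (j.val + 1)) j.val with hxdef
  set x' : Fin (n+1) → Fin d → ℝ := fun j => T.embed (β j) j.val with hx'def
  have hx : ∀ i, x i ∈ K₀ := fun i => hK₀ _ _
  have hx' : ∀ i, x' i ∈ K₀ := fun i => hK₀ _ _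
  have hlastx : x (Fin.last n) = x' (Fin.last n) := by
    simp only [hxdef, hx'def, Fin.val_last, hlast]
  -- Hamming count
  have hhamc : ((Finset.univ.filter
      (fun i : Fin (n+1) => α (i.val + 1) ≠ β i)).card : ℝ) ≤ θ * (n + 1) := by
    rw [relHamming, div_le_iff₀ (by positivity)] at hham
    convert hham using 3 <;> push_cast <;> rfl
  have hcount : (((Finset.Iic (Fin.last n)).filter
      (fun i => ¬ ‖x i - x' i‖ ≤ η)).card : ℝ) ≤ θ * (((Fin.last n).val : ℝ) + 1) := by
    have hsub : (Finset.Iic (Fin.last n)).filter (fun i => ¬ ‖x i - x' i‖ ≤ η)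
        ⊆ Finset.univ.filter (fun i : Fin (n+1) => α (i.val + 1) ≠ β i) := by
      intro i hi
      rw [Finset.mem_filter] at hi ⊢
      refine ⟨Finset.mem_univ _, fun heq => hi.2 ?_⟩
      have : x i = x' i := by simp only [hxdef, hx'def, heq]
      rw [this, sub_self]
      simpa using hη.le
    have := Finset.card_le_card hsub
    rw [Fin.val_last]
    calc (((Finset.Iic (Fin.last n)).filter (fun i => ¬ ‖x i - x' i‖ ≤ η)).card : ℝ)
        ≤ ((Finset.univ.filter (fun i : Fin (n+1) => α (i.val + 1) ≠ β i)).card : ℝ) := by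
          exact_mod_cast this
      _ ≤ θ * ((n:ℝ) + 1) := hhamc
  have hML' : ‖applyLayers T.layers x (Fin.last n) - applyLayers T.layers x' (Fin.last n)‖
      ≤ ηP := by
    apply hML (n+1) x x' hx hx' (Fin.last n) hcount
    rw [hlastx, sub_self]
    simpa using hη.le
  have hpd : dist (T.proj (applyLayers T.layers x (Fin.last n)))
      (T.proj (applyLayers T.layers x' (Fin.last n))) ≤ ε/3 :=
    hproj _ (hKf (n+1) x hx (Fin.last n)) _ (hKf (n+1) x' hx' (Fin.last n))
      (by rw [dist_eq_norm]; exact hML')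
  have hpt : ∀ τ : A, |T.proj (applyLayers T.layers x (Fin.last n)) τ
      - T.proj (applyLayers T.layers x' (Fin.last n)) τ| ≤ ε/3 := by
    intro τ
    have h := dist_le_pi_dist (T.proj (applyLayers T.layers x (Fin.last n)))
      (T.proj (applyLayers T.layers x' (Fin.last n))) τ
    rw [Real.dist_eq] at h
    exact h.trans hpd
  have hevalα : T.eval (fun i : Fin (n + 1) => α (i.val + 1))
      = T.proj (applyLayers T.layers x (Fin.last n)) := rfl
  have hevalβ : T.eval β = T.proj (applyLayers T.layers x' (Fin.last n)) := rfl
  have hL := hlearn n hn σ hσ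
  have h1 := hpt σ
  have h2 := hpt (α (n + 2))
  rw [abs_le] at h1 h2
  rw [hevalα] at hL
  rw [hevalβ]
  obtain ⟨h1a, h1b⟩ := h1
  obtain ⟨h2a, h2b⟩ := h2
  linarith
end
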